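/- arXiv:2512.13504 — 7 statements merged into one kernel-verified Lean document; each statement's English description precedes it below -/
import Mathlib

section
/- Let A be an n×n real matrix admitting an exponential decay bound: there exist M > 0 and α > 0 such that ‖exp(tA)‖₂ ≤ M·exp(−α t) for all t ≥ 0. Let Q be a symmetric n×n real matrix such that Q·Aᵀ + A·Q is negative semidefinite (i.e., −(Q·Aᵀ + A·Q) is positive semidefinite). Then Q is positive semidefinite. -/
open Matrix Filter
open scoped Matrix.Norms.L2Operator Topology

/-- If `A` admits the exponential decay bound
`‖exp(tA)‖₂ ≤ M·exp(−αt)` for all `t ≥ 0`, and `Q` is symmetric with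
`Q·Aᵀ + A·Q` negative semidefinite, then `Q` is positive semidefinite. -/
theorem stmt_1 {n : ℕ} (A Q : Matrix (Fin n) (Fin n) ℝ)
    (M α : ℝ) (hM : 0 < M) (hα : 0 < α)
    (hdecay : ∀ t : ℝ, 0 ≤ t →
      ‖NormedSpace.exp (t • A)‖ ≤ M * Real.exp (-α * t))
    (hQsym : Qᵀ = Q)
    (hneg : (-(Q * Aᵀ + A * Q)).PosSemidef) :
    Q.PosSemidef := by
  have hherm : Q.IsHermitian := by
    have : Qᴴ = Qᵀ := by ext i j; simp
    rw [Matrix.IsHermitian, this, hQsym]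
  refine PosSemidef.of_dotProduct_mulVec_nonneg hherm fun x => ?_
  -- set up
  set E : ℝ → Matrix (Fin n) (Fin n) ℝ := fun t => NormedSpace.exp (t • Aᵀ) with hEdef
  set v : ℝ → (Fin n → ℝ) := fun t => (E t) *ᵥ x with hvdef
  set g : ℝ → ℝ := fun t => v t ⬝ᵥ (Q *ᵥ v t) with hgdef
  -- derivative of E
  have hE : ∀ t : ℝ, HasDerivAt E (Aᵀ * E t) t := fun t =>
    hasDerivAt_exp_smul_const' Aᵀ t
  -- derivative of components of v
  have hv : ∀ (i : Fin n) (t : ℝ),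
      HasDerivAt (fun t => v t i) ((Aᵀ *ᵥ v t) i) t := by
    intro i t
    let L : Matrix (Fin n) (Fin n) ℝ →ₗ[ℝ] ℝ :=
      { toFun := fun N => (N *ᵥ x) i
        map_add' := fun N₁ N₂ => by simp [Matrix.add_mulVec]
        map_smul' := fun c N => by simp [Matrix.smul_mulVec] }
    have h := L.toContinuousLinearMap.hasFDerivAt.comp_hasDerivAt t (hE t)
    have h2 : L (Aᵀ * E t) = (Aᵀ *ᵥ v t) i := by
      simp only [L, LinearMap.coe_mk, AddHom.coe_mk]
      rw [← Matrix.mulVec_mulVec]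
    have h3 := by simpa [L, h2] using h
    exact h3
  -- derivative of g
  have hg : ∀ t : ℝ, HasDerivAt g
      ((Aᵀ *ᵥ v t) ⬝ᵥ (Q *ᵥ v t) + v t ⬝ᵥ (Q *ᵥ (Aᵀ *ᵥ v t))) t := by
    intro t
    have : HasDerivAt (fun t => ∑ i, v t i * ∑ j, Q i j * v t j)
        (∑ i, ((Aᵀ *ᵥ v t) i * ∑ j, Q i j * v t j
          + v t i * ∑ j, Q i j * (Aᵀ *ᵥ v t) j)) t := by
      apply HasDerivAt.fun_sum
      intro i _
      exact (hv i t).mul <| HasDerivAt.fun_sum fun j _ => (hv j t).const_mul (Q i j)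
    have e1 : (fun t => ∑ i, v t i * ∑ j, Q i j * v t j) = g := by
      funext t; simp [hgdef, dotProduct, Matrix.mulVec, dotProduct]
    have e2 : (∑ i, ((Aᵀ *ᵥ v t) i * ∑ j, Q i j * v t j
          + v t i * ∑ j, Q i j * (Aᵀ *ᵥ v t) j))
        = (Aᵀ *ᵥ v t) ⬝ᵥ (Q *ᵥ v t) + v t ⬝ᵥ (Q *ᵥ (Aᵀ *ᵥ v t)) := by
      rw [Finset.sum_add_distrib]; rfl
    rw [← e1]; rw [e2] at this; exact this
  -- the derivative is nonpositive
  have hg' : ∀ t : ℝ, (Aᵀ *ᵥ v t) ⬝ᵥ (Q *ᵥ v t) + v t ⬝ᵥ (Q *ᵥ (Aᵀ *ᵥ v t)) ≤ 0 := by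
    intro t
    have h0 := hneg.dotProduct_mulVec_nonneg (v t)
    have e1 : (Aᵀ *ᵥ v t) ⬝ᵥ (Q *ᵥ v t) = v t ⬝ᵥ ((A * Q) *ᵥ v t) := by
      rw [Matrix.mulVec_transpose, ← Matrix.dotProduct_mulVec, Matrix.mulVec_mulVec]
    have e2 : v t ⬝ᵥ (Q *ᵥ (Aᵀ *ᵥ v t)) = v t ⬝ᵥ ((Q * Aᵀ) *ᵥ v t) := by
      rw [Matrix.mulVec_mulVec]
    rw [e1, e2, ← dotProduct_add, ← Matrix.add_mulVec]
    have : star (v t) = v t := by simp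
    rw [this, Matrix.neg_mulVec, dotProduct_neg] at h0
    have := neg_nonneg.mp (by linarith : 0 ≤ -(v t ⬝ᵥ (Q * Aᵀ + A * Q) *ᵥ v t))
    calc v t ⬝ᵥ (A * Q + Q * Aᵀ) *ᵥ v t
        = v t ⬝ᵥ (Q * Aᵀ + A * Q) *ᵥ v t := by rw [add_comm]
      _ ≤ 0 := this
  -- g is antitone
  have hanti : Antitone g :=
    antitone_of_hasDerivAt_nonpos (fun t => hg t) (fun t => hg' t)
  -- g tends to 0
  have key : ∀ a b : Fin n → ℝ,
      |a ⬝ᵥ b| ≤ ‖(WithLp.equiv 2 (Fin n → ℝ)).symm a‖ * ‖(WithLp.equiv 2 (Fin n → ℝ)).symm b‖ := by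
    intro a b
    have := abs_real_inner_le_norm ((WithLp.equiv 2 (Fin n → ℝ)).symm a)
      ((WithLp.equiv 2 (Fin n → ℝ)).symm b)
    simpa [PiLp.inner_apply, dotProduct, RCLike.inner_apply, conj_trivial, mul_comm] using this
  set xe := (WithLp.equiv 2 (Fin n → ℝ)).symm x with hxe
  have hbound : ∀ t : ℝ, 0 ≤ t →
      |g t| ≤ ‖Q‖ * (M * Real.exp (-α * t) * ‖xe‖) ^ 2 := by
    intro t ht
    have hEt : ‖E t‖ ≤ M * Real.exp (-α * t) := by
      have hEeq : E t = (NormedSpace.exp (t • A))ᵀ := by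
        show NormedSpace.exp (t • Aᵀ) = (NormedSpace.exp (t • A))ᵀ
        rw [← Matrix.transpose_smul, Matrix.exp_transpose]
      rw [hEeq]
      have htr : ‖(NormedSpace.exp (t • A))ᵀ‖ = ‖NormedSpace.exp (t • A)‖ := by
        have h3 : (NormedSpace.exp (t • A))ᴴ = (NormedSpace.exp (t • A))ᵀ := by
          ext i j; simp
        rw [← h3, Matrix.l2_opNorm_conjTranspose]
      rw [htr]; exact hdecay t ht
    have hve : ‖(WithLp.equiv 2 (Fin n → ℝ)).symm (v t)‖ ≤ M * Real.exp (-α * t) * ‖xe‖ := by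
      have := (E t).l2_opNorm_mulVec xe
      have hx2 : (E t) *ᵥ xe = v t := rfl
      calc ‖(WithLp.equiv 2 (Fin n → ℝ)).symm (v t)‖
          ≤ ‖E t‖ * ‖xe‖ := by rw [← hx2]; exact this
        _ ≤ M * Real.exp (-α * t) * ‖xe‖ := by
            apply mul_le_mul_of_nonneg_right hEt (norm_nonneg _)
    have hQv : ‖(WithLp.equiv 2 (Fin n → ℝ)).symm (Q *ᵥ v t)‖
        ≤ ‖Q‖ * ‖(WithLp.equiv 2 (Fin n → ℝ)).symm (v t)‖ :=
      Q.l2_opNorm_mulVec ((WithLp.equiv 2 (Fin n → ℝ)).symm (v t))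
    have h1 := key (v t) (Q *ᵥ v t)
    have hvn : (0:ℝ) ≤ ‖(WithLp.equiv 2 (Fin n → ℝ)).symm (v t)‖ := norm_nonneg _
    have hQn : (0:ℝ) ≤ ‖Q‖ := norm_nonneg _
    have hr : (0:ℝ) ≤ M * Real.exp (-α * t) * ‖xe‖ := by positivity
    have hgt : g t = v t ⬝ᵥ (Q *ᵥ v t) := rfl
    rw [hgt]
    set nv := ‖(WithLp.equiv 2 (Fin n → ℝ)).symm (v t)‖
    set nq := ‖(WithLp.equiv 2 (Fin n → ℝ)).symm (Q *ᵥ v t)‖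
    set r := M * Real.exp (-α * t) * ‖xe‖
    calc |v t ⬝ᵥ (Q *ᵥ v t)| ≤ nv * nq := h1
      _ ≤ nv * (‖Q‖ * nv) := by
          exact mul_le_mul_of_nonneg_left hQv hvn
      _ = ‖Q‖ * (nv * nv) := by ring
      _ ≤ ‖Q‖ * (r * r) := by
          apply mul_le_mul_of_nonneg_left _ hQn
          exact mul_le_mul hve hve hvn hr
      _ = ‖Q‖ * r ^ 2 := by ring
  have htend : Tendsto g atTop (𝓝 0) := by
    have hb : Tendsto (fun t => ‖Q‖ * (M * Real.exp (-α * t) * ‖xe‖) ^ 2) atTop (𝓝 0) := by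
      have h1 : Tendsto (fun t : ℝ => Real.exp (-α * t)) atTop (𝓝 0) := by
        apply Real.tendsto_exp_atBot.comp
        exact Tendsto.const_mul_atTop_of_neg (neg_neg_iff_pos.mpr hα) tendsto_id |>.mono_right le_rfl
      have := ((h1.const_mul M).mul_const ‖xe‖)
      have h2 := (this.pow 2).const_mul ‖Q‖
      simpa using h2
    have hub : ∀ᶠ t in atTop, g t ≤ ‖Q‖ * (M * Real.exp (-α * t) * ‖xe‖) ^ 2 := by
      filter_upwards [eventually_ge_atTop (0:ℝ)] with t ht
      exact le_trans (le_abs_self _) (hbound t ht)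
    have hlb : ∀ᶠ t in atTop, -(‖Q‖ * (M * Real.exp (-α * t) * ‖xe‖) ^ 2) ≤ g t := by
      filter_upwards [eventually_ge_atTop (0:ℝ)] with t ht
      have := hbound t ht
      have := neg_abs_le (g t)
      linarith
    have := tendsto_of_tendsto_of_tendsto_of_le_of_le' (by simpa using hb.neg) hb hlb hub
    simpa using this
  -- conclude
  have h0 : ∀ t : ℝ, 0 ≤ t → g t ≤ g 0 := fun t ht => hanti ht
  have : (0:ℝ) ≤ g 0 := by
    apply le_of_tendsto htend
    filter_upwards [eventually_ge_atTop (0:ℝ)] with t ht using h0 t ht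
  have hg0 : g 0 = x ⬝ᵥ (Q *ᵥ x) := by
    simp [hgdef, hvdef, hEdef, NormedSpace.exp_zero, Matrix.one_mulVec]
  rw [hg0] at this
  simpa using this
end

section
/- Let A be an n×n real matrix admitting an exponential decay bound: there exist M > 0 and α > 0 such that ‖exp(tA)‖₂ ≤ M·exp(−α t) for all t ≥ 0. Let Q be an n×n real matrix, and suppose X₁ and X₂ are n×n real matrices both satisfying the Lyapunov equation A·X + X·Aᵀ = −Q. Then X₁ = X₂. -/
open Matrix
open scoped Matrix.Norms.L2Operator

lemma exp_comm_of_mul {n : ℕ} {x y b : Matrix (Fin n) (Fin n) ℝ} (h : x * b = b * y) :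
    NormedSpace.exp x * b = b * NormedSpace.exp y := by
  have hk : ∀ k : ℕ, x ^ k * b = b * y ^ k := by
    intro k
    induction k with
    | zero => simp
    | succ k ih =>
      rw [pow_succ, mul_assoc, h, ← mul_assoc, ih, mul_assoc, ← pow_succ]
  rw [NormedSpace.exp_eq_tsum (𝕂 := ℝ)]
  beta_reduce
  rw [← (NormedSpace.expSeries_summable' (𝕂 := ℝ) x).tsum_mul_right b,
      ← (NormedSpace.expSeries_summable' (𝕂 := ℝ) y).tsum_mul_left b]
  congr 1
  ext k
  rw [smul_mul_assoc, hk, mul_smul_comm]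

/-- If `A` admits the exponential decay bound
`‖exp(tA)‖₂ ≤ M·exp(−αt)` for all `t ≥ 0`, then the Lyapunov equation
`A·X + X·Aᵀ = −Q` has at most one solution. -/
theorem stmt_2 {n : ℕ} (A Q X₁ X₂ : Matrix (Fin n) (Fin n) ℝ)
    (M α : ℝ) (hM : 0 < M) (hα : 0 < α)
    (hdecay : ∀ t : ℝ, 0 ≤ t →
      ‖NormedSpace.exp (t • A)‖ ≤ M * Real.exp (-α * t))
    (hX₁ : A * X₁ + X₁ * Aᵀ = -Q)
    (hX₂ : A * X₂ + X₂ * Aᵀ = -Q) :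
    X₁ = X₂ := by
  set Y := X₁ - X₂ with hY
  have hAY : A * Y = Y * (-Aᵀ) := by
    have h1 := eq_sub_of_add_eq hX₁
    have h2 := eq_sub_of_add_eq hX₂
    simp only [hY, mul_sub, sub_mul, h1, h2, mul_neg]
    abel
  set t : ℝ := max 0 (Real.log M / α) + 1 with ht
  have ht0 : 0 ≤ t := by positivity
  have hcomm : (t • A) * Y = Y * (t • (-Aᵀ)) := by
    rw [smul_mul_assoc, mul_smul_comm, hAY]
  have key : NormedSpace.exp (t • A) * Y = Y * NormedSpace.exp (t • (-Aᵀ)) :=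
    exp_comm_of_mul hcomm
  have hinv : NormedSpace.exp (t • (-Aᵀ)) * NormedSpace.exp (t • Aᵀ) = 1 := by
    rw [smul_neg, ← Matrix.exp_add_of_commute _ _ (Commute.refl (t • Aᵀ)).neg_left,
      neg_add_cancel, NormedSpace.exp_zero]
  have hfixed : NormedSpace.exp (t • A) * Y * NormedSpace.exp (t • Aᵀ) = Y := by
    rw [key, mul_assoc, hinv, mul_one]
  -- norm of the transpose factor
  have htransp : NormedSpace.exp (t • Aᵀ) = (NormedSpace.exp (t • A))ᵀ := by
    rw [← transpose_smul, Matrix.exp_transpose]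
  have hnormT : ‖NormedSpace.exp (t • Aᵀ)‖ = ‖NormedSpace.exp (t • A)‖ := by
    rw [htransp, ← conjTranspose_eq_transpose_of_trivial, l2_opNorm_conjTranspose]
  set c : ℝ := M * Real.exp (-α * t) with hc
  have hc0 : 0 < c := by positivity
  have hc1 : c < 1 := by
    have hlog : Real.log M < α * t := by
      rw [ht, mul_add, mul_one]
      have h1 : Real.log M ≤ α * max 0 (Real.log M / α) := by
        calc Real.log M = α * (Real.log M / α) := by field_simp
          _ ≤ α * max 0 (Real.log M / α) := by
              gcongr
              exact le_max_right _ _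
      linarith
    calc c = Real.exp (Real.log M + (-α * t)) := by
            rw [Real.exp_add, Real.exp_log hM]
      _ < 1 := by rw [Real.exp_lt_one_iff]; linarith
  have hbound : ‖Y‖ ≤ c * ‖Y‖ * c := by
    calc ‖Y‖ = ‖NormedSpace.exp (t • A) * Y * NormedSpace.exp (t • Aᵀ)‖ := by
            rw [hfixed]
      _ ≤ ‖NormedSpace.exp (t • A) * Y‖ * ‖NormedSpace.exp (t • Aᵀ)‖ := norm_mul_le _ _
      _ ≤ ‖NormedSpace.exp (t • A)‖ * ‖Y‖ * ‖NormedSpace.exp (t • Aᵀ)‖ := by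
            gcongr
            exact norm_mul_le _ _
      _ ≤ c * ‖Y‖ * c := by
            rw [hnormT]
            exact mul_le_mul (mul_le_mul (hdecay t ht0) le_rfl (norm_nonneg Y) hc0.le)
              (hdecay t ht0) (norm_nonneg _) (by positivity)
  have hcc : c * c < 1 := by nlinarith
  have hYnorm : ‖Y‖ = 0 := by
    by_contra h
    have hpos : 0 < ‖Y‖ := (norm_nonneg Y).lt_of_ne (Ne.symm h)
    nlinarith
  have : Y = 0 := norm_eq_zero.mp hYnorm
  have := sub_eq_zero.mp (hY ▸ this)
  exact this
end

section
/- Let A be an n×n real matrix admitting an exponential decay bound: there exist M > 0 and α > 0 such that ‖exp(tA)‖₂ ≤ M·exp(−α t) for all t ≥ 0. Let B be an n×m real matrix, let P be the unique solution of the Lyapunov equation A·P + P·Aᵀ + B·Bᵀ = 0, and let C be a p×n real matrix. Then tr(C·P·Cᵀ) equals the infimum of tr(C·X·Cᵀ) over all symmetric positive definite n×n real matrices X satisfying the strict Lyapunov inequality that X·Aᵀ + A·X + B·Bᵀ is negative definite. -/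
open Matrix Filter
open scoped Matrix.Norms.L2Operator Topology

namespace Stmt4Aux

variable {n : ℕ}

/-- The continuous linear functional `N ↦ x ⬝ᵥ N *ᵥ y` on matrices. -/
noncomputable def quadL (x y : Fin n → ℝ) : Matrix (Fin n) (Fin n) ℝ →L[ℝ] ℝ :=
  LinearMap.toContinuousLinearMap
  { toFun := fun N => x ⬝ᵥ N.mulVec y
    map_add' := fun N M => by simp [Matrix.add_mulVec, dotProduct_add]
    map_smul' := fun c N => by simp [Matrix.smul_mulVec, dotProduct_smul] }

@[simp] lemma quadL_apply (x y : Fin n → ℝ) (N : Matrix (Fin n) (Fin n) ℝ) :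
    quadL x y N = x ⬝ᵥ N.mulVec y := rfl

lemma exp_cont (D : Matrix (Fin n) (Fin n) ℝ) :
    Continuous fun t : ℝ => NormedSpace.exp (t • D) :=
  continuous_iff_continuousAt.2 fun t => (hasDerivAt_exp_smul_const' D t).continuousAt

lemma quad_conj (E Q : Matrix (Fin n) (Fin n) ℝ) (x y : Fin n → ℝ) :
    x ⬝ᵥ (E * Q * Eᵀ).mulVec y = (Eᵀ.mulVec x) ⬝ᵥ Q.mulVec (Eᵀ.mulVec y) := by
  rw [← Matrix.mulVec_mulVec, ← Matrix.mulVec_mulVec, Matrix.dotProduct_mulVec,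
    ← Matrix.mulVec_transpose]

/-- Core limit lemma: the solution of the Lyapunov equation is the limit of
`∫₀ᵀ x ⬝ᵥ (e^{tA} Q e^{tAᵀ}) y dt`. -/
lemma lyap_tendsto (A S Q : Matrix (Fin n) (Fin n) ℝ)
    (hS : A * S + S * Aᵀ + Q = 0)
    (M α : ℝ) (hM : 0 < M) (hα : 0 < α)
    (hdecay : ∀ t : ℝ, 0 ≤ t → ‖NormedSpace.exp (t • A)‖ ≤ M * Real.exp (-α * t))
    (x y : Fin n → ℝ) :
    Tendsto (fun T : ℝ => ∫ t in (0:ℝ)..T,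
        x ⬝ᵥ ((NormedSpace.exp (t • A)) * Q * (NormedSpace.exp (t • A))ᵀ).mulVec y)
      atTop (𝓝 (x ⬝ᵥ S.mulVec y)) := by
  set E : ℝ → Matrix (Fin n) (Fin n) ℝ := fun t => NormedSpace.exp (t • A) with hE
  have hEt : (fun u : ℝ => (E u)ᵀ) = fun u => NormedSpace.exp (u • Aᵀ) := by
    funext u; rw [hE]; simp [← Matrix.exp_transpose]
  have hEd : ∀ t, HasDerivAt E (A * E t) t := fun t => hasDerivAt_exp_smul_const' A t
  have hEdT : ∀ t, HasDerivAt (fun u => (E u)ᵀ) ((E t)ᵀ * Aᵀ) t := by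
    intro t
    rw [hEt]
    have := hasDerivAt_exp_smul_const (𝕂 := ℝ) Aᵀ t
    simpa [← congrFun hEt t] using this
  have hcomm : ∀ t, A * E t = E t * A := fun t =>
    (((Commute.refl A).smul_right t).exp_right).eq
  have hcommT : ∀ t, (E t)ᵀ * Aᵀ = Aᵀ * (E t)ᵀ := by
    intro t
    have := congrArg Matrix.transpose (hcomm t)
    simpa [Matrix.transpose_mul] using this
  set g : ℝ → ℝ := fun t => x ⬝ᵥ (E t * Q * (E t)ᵀ).mulVec y with hg
  set ψ : ℝ → ℝ := fun t => x ⬝ᵥ (E t * S * (E t)ᵀ).mulVec y with hψdef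
  have hgcont : Continuous g := by
    refine (quadL x y).continuous.comp ?_
    exact ((exp_cont A).mul continuous_const).mul (by rw [hEt]; exact exp_cont Aᵀ)
  have hψ : ∀ t, HasDerivAt ψ (-(g t)) t := by
    intro t
    have h1 : HasDerivAt (fun u => E u * S * (E u)ᵀ)
        ((A * E t * S) * (E t)ᵀ + (E t * S) * ((E t)ᵀ * Aᵀ)) t := by
      have := (((hEd t).mul_const S).mul (hEdT t))
      exact this
    have h2 := (quadL x y).hasFDerivAt.comp_hasDerivAt t h1
    have hkey : (A * E t * S) * (E t)ᵀ + (E t * S) * ((E t)ᵀ * Aᵀ)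
        = E t * (A * S + S * Aᵀ) * (E t)ᵀ := by
      rw [hcomm t, hcommT t]; noncomm_ring
    have hQ : A * S + S * Aᵀ = -Q := by
      have := hS; rwa [add_eq_zero_iff_eq_neg] at this
    have : (quadL x y) ((A * E t * S) * (E t)ᵀ + (E t * S) * ((E t)ᵀ * Aᵀ)) = -(g t) := by
      rw [hkey, hQ]
      simp [hg, Matrix.neg_mulVec, Matrix.mul_neg, Matrix.neg_mul]
    rw [← this]
    exact h2
  have hint : ∀ T : ℝ, (∫ t in (0:ℝ)..T, g t) = ψ 0 - ψ T := by
    intro T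
    have h1 : (∫ t in (0:ℝ)..T, -(g t)) = ψ T - ψ 0 :=
      intervalIntegral.integral_eq_sub_of_hasDerivAt (fun t _ => hψ t)
        (hgcont.neg.intervalIntegrable 0 T)
    have h2 : (∫ t in (0:ℝ)..T, -(g t)) = -∫ t in (0:ℝ)..T, g t := by
      simp [intervalIntegral.integral_neg]
    rw [h2] at h1
    linarith
  have hψ0 : ψ 0 = x ⬝ᵥ S.mulVec y := by
    simp [hψdef, hE, NormedSpace.exp_zero]
  have hψtend : Tendsto ψ atTop (𝓝 0) := by
    have hbound : ∀ᶠ T in atTop, ‖ψ T‖ ≤ (‖quadL x y‖ * ‖S‖ * (M * M)) * Real.exp (-(2*α) * T) := by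
      filter_upwards [eventually_ge_atTop (0:ℝ)] with T hT
      have hET : ‖E T‖ ≤ M * Real.exp (-α * T) := hdecay T hT
      have hETt : ‖(E T)ᵀ‖ = ‖E T‖ := by
        rw [← conjTranspose_eq_transpose_of_trivial, Matrix.l2_opNorm_conjTranspose]
      have h1 : ‖E T * S * (E T)ᵀ‖ ≤ ‖E T‖ * ‖S‖ * ‖E T‖ := by
        calc ‖E T * S * (E T)ᵀ‖ ≤ ‖E T * S‖ * ‖(E T)ᵀ‖ := norm_mul_le _ _
          _ ≤ (‖E T‖ * ‖S‖) * ‖(E T)ᵀ‖ :=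
              mul_le_mul_of_nonneg_right (norm_mul_le _ _) (norm_nonneg _)
          _ = ‖E T‖ * ‖S‖ * ‖E T‖ := by rw [hETt]
      have h2 : ‖ψ T‖ ≤ ‖quadL x y‖ * ‖E T * S * (E T)ᵀ‖ := by
        simpa using (quadL x y).le_opNorm (E T * S * (E T)ᵀ)
      have hEnn : (0:ℝ) ≤ ‖E T‖ := norm_nonneg _
      have hexp : Real.exp (-α * T) * Real.exp (-α * T) = Real.exp (-(2*α) * T) := by
        rw [← Real.exp_add]; ring_nf
      calc ‖ψ T‖ ≤ ‖quadL x y‖ * (‖E T‖ * ‖S‖ * ‖E T‖) :=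
            le_trans h2 (by gcongr)
        _ ≤ ‖quadL x y‖ * ((M * Real.exp (-α * T)) * ‖S‖ * (M * Real.exp (-α * T))) := by
            gcongr
        _ = (‖quadL x y‖ * ‖S‖ * (M * M)) * Real.exp (-(2*α) * T) := by rw [← hexp]; ring
    have hexp0 : Tendsto (fun T : ℝ => (‖quadL x y‖ * ‖S‖ * (M * M)) * Real.exp (-(2*α) * T))
        atTop (𝓝 0) := by
      have h1 : Tendsto (fun T : ℝ => -(2*α) * T) atTop atBot :=
        tendsto_id.const_mul_atTop_of_neg (by nlinarith)
      have := Real.tendsto_exp_atBot.comp h1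
      simpa using this.const_mul (‖quadL x y‖ * ‖S‖ * (M * M))
    exact squeeze_zero_norm' hbound hexp0
  have htend : Tendsto (fun T => ψ 0 - ψ T) atTop (𝓝 (ψ 0 - 0)) :=
    tendsto_const_nhds.sub hψtend
  rw [sub_zero] at htend
  have h5 := htend.congr fun T => (hint T).symm
  rwa [hψ0] at h5

lemma lyap_nonneg (A S Q : Matrix (Fin n) (Fin n) ℝ)
    (hS : A * S + S * Aᵀ + Q = 0)
    (M α : ℝ) (hM : 0 < M) (hα : 0 < α)
    (hdecay : ∀ t : ℝ, 0 ≤ t → ‖NormedSpace.exp (t • A)‖ ≤ M * Real.exp (-α * t))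
    (hQ : ∀ v : Fin n → ℝ, 0 ≤ v ⬝ᵥ Q.mulVec v) (x : Fin n → ℝ) :
    0 ≤ x ⬝ᵥ S.mulVec x := by
  refine ge_of_tendsto (lyap_tendsto A S Q hS M α hM hα hdecay x x) ?_
  filter_upwards [eventually_ge_atTop (0:ℝ)] with T hT
  refine intervalIntegral.integral_nonneg hT fun t _ => ?_
  rw [quad_conj]
  exact hQ _

lemma exp_mul_exp_neg (A : Matrix (Fin n) (Fin n) ℝ) (t : ℝ) :
    NormedSpace.exp (t • A) * NormedSpace.exp (-(t • A)) = 1 ∧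
    NormedSpace.exp (-(t • A)) * NormedSpace.exp (t • A) = 1 := by
  constructor
  · rw [← Matrix.exp_add_of_commute (t • A) (-(t • A)) (Commute.neg_right (Commute.refl _))]
    simp [NormedSpace.exp_zero]
  · rw [← Matrix.exp_add_of_commute (-(t • A)) (t • A) (Commute.neg_left (Commute.refl _))]
    simp [NormedSpace.exp_zero]

lemma lyap_pos (A S Q : Matrix (Fin n) (Fin n) ℝ)
    (hS : A * S + S * Aᵀ + Q = 0)
    (M α : ℝ) (hM : 0 < M) (hα : 0 < α)
    (hdecay : ∀ t : ℝ, 0 ≤ t → ‖NormedSpace.exp (t • A)‖ ≤ M * Real.exp (-α * t))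
    (hQ : Q.PosDef) (x : Fin n → ℝ) (hx : x ≠ 0) :
    0 < x ⬝ᵥ S.mulVec x := by
  set E : ℝ → Matrix (Fin n) (Fin n) ℝ := fun t => NormedSpace.exp (t • A) with hE
  set g : ℝ → ℝ := fun t => x ⬝ᵥ (E t * Q * (E t)ᵀ).mulVec x with hg
  have hgcont : Continuous g := by
    refine (quadL x x).continuous.comp ?_
    refine ((exp_cont A).mul continuous_const).mul ?_
    have : (fun u : ℝ => (E u)ᵀ) = fun u => NormedSpace.exp (u • Aᵀ) := by
      funext u; rw [hE]; simp [← Matrix.exp_transpose]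
    rw [this]; exact exp_cont Aᵀ
  have hgpos : ∀ t, 0 < g t := by
    intro t
    have hv : (E t)ᵀ.mulVec x ≠ 0 := by
      intro h0
      have h1 := (exp_mul_exp_neg A t).1
      have h2 : (NormedSpace.exp (-(t • A)))ᵀ * (E t)ᵀ = 1 := by
        rw [← Matrix.transpose_mul, h1, Matrix.transpose_one]
      have : x = ((NormedSpace.exp (-(t • A)))ᵀ * (E t)ᵀ).mulVec x := by
        rw [h2, Matrix.one_mulVec]
      rw [← Matrix.mulVec_mulVec, h0, Matrix.mulVec_zero] at this
      exact hx this
    have hpos := hQ.dotProduct_mulVec_pos hv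
    simp only [star_trivial] at hpos
    have hgt : g t = ((E t)ᵀ.mulVec x) ⬝ᵥ Q.mulVec ((E t)ᵀ.mulVec x) := by
      show x ⬝ᵥ (E t * Q * (E t)ᵀ).mulVec x = _
      exact quad_conj _ _ _ _
    rw [hgt]
    exact hpos
  have hgnonneg : ∀ t, 0 ≤ g t := fun t => (hgpos t).le
  have h01 : (0:ℝ) < ∫ t in (0:ℝ)..1, g t :=
    intervalIntegral.intervalIntegral_pos_of_pos (hgcont.intervalIntegrable 0 1) hgpos one_pos
  refine lt_of_lt_of_le h01 ?_
  refine ge_of_tendsto (lyap_tendsto A S Q hS M α hM hα hdecay x x) ?_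
  filter_upwards [eventually_ge_atTop (1:ℝ)] with T hT
  have hsplit : (∫ t in (0:ℝ)..1, g t) + (∫ t in (1:ℝ)..T, g t) = ∫ t in (0:ℝ)..T, g t :=
    intervalIntegral.integral_add_adjacent_intervals (hgcont.intervalIntegrable 0 1)
      (hgcont.intervalIntegrable 1 T)
  have h2 : (0:ℝ) ≤ ∫ t in (1:ℝ)..T, g t :=
    intervalIntegral.integral_nonneg hT fun t _ => hgnonneg t
  have : (∫ t in (0:ℝ)..1, g t) ≤ ∫ t in (0:ℝ)..T, g t := by
    rw [← hsplit]; linarith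
  exact this

lemma lyap_inj (A S : Matrix (Fin n) (Fin n) ℝ)
    (hS : A * S + S * Aᵀ = 0)
    (M α : ℝ) (hM : 0 < M) (hα : 0 < α)
    (hdecay : ∀ t : ℝ, 0 ≤ t → ‖NormedSpace.exp (t • A)‖ ≤ M * Real.exp (-α * t)) :
    S = 0 := by
  have key : ∀ x y : Fin n → ℝ, x ⬝ᵥ S.mulVec y = 0 := by
    intro x y
    have h := lyap_tendsto A S 0 (by rw [add_zero]; exact hS) M α hM hα hdecay x y
    have h0 : Tendsto (fun _ : ℝ => (0:ℝ)) atTop (𝓝 (0:ℝ)) := tendsto_const_nhds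
    have heq : (fun T : ℝ => ∫ t in (0:ℝ)..T,
        x ⬝ᵥ ((NormedSpace.exp (t • A)) * 0 * (NormedSpace.exp (t • A))ᵀ).mulVec y)
        = fun _ : ℝ => (0:ℝ) := by
      funext T; simp
    rw [heq] at h
    exact (tendsto_nhds_unique h0 h).symm
  ext i j
  have := key (Pi.single i 1) (Pi.single j 1)
  simpa [Matrix.mulVec_single, dotProduct, Pi.single_apply, Finset.sum_ite_eq'] using this

/-- The Lyapunov operator `S ↦ A S + S Aᵀ` as a linear map. -/
noncomputable def lyapOp (A : Matrix (Fin n) (Fin n) ℝ) :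
    Matrix (Fin n) (Fin n) ℝ →ₗ[ℝ] Matrix (Fin n) (Fin n) ℝ where
  toFun := fun S => A * S + S * Aᵀ
  map_add' := fun S T => by noncomm_ring
  map_smul' := fun c S => by simp [Matrix.mul_smul, Matrix.smul_mul, smul_add]

lemma trace_quad {p : ℕ} (C : Matrix (Fin p) (Fin n) ℝ) (D : Matrix (Fin n) (Fin n) ℝ) :
    (C * D * Cᵀ).trace = ∑ i, (C i) ⬝ᵥ D.mulVec (C i) := by
  simp only [Matrix.trace, Matrix.diag, Matrix.mul_apply, Matrix.transpose_apply,
    dotProduct, Matrix.mulVec, Finset.sum_mul, Finset.mul_sum]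
  refine Finset.sum_congr rfl fun i _ => ?_
  rw [Finset.sum_comm]
  refine Finset.sum_congr rfl fun j _ => Finset.sum_congr rfl fun k _ => by ring

end Stmt4Aux

open Stmt4Aux

/-- If `A` admits the exponential decay bound
`‖exp(tA)‖₂ ≤ M·exp(−αt)` for all `t ≥ 0`, `P` is the (unique) solution of
`A·P + P·Aᵀ + B·Bᵀ = 0`, and `C` is a `p×n` real matrix, then `tr(C·P·Cᵀ)` is the
infimum of `tr(C·X·Cᵀ)` over all symmetric positive definite `X` with
`X·Aᵀ + A·X + B·Bᵀ` negative definite. -/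
theorem stmt_4 {n m p : ℕ} (A P : Matrix (Fin n) (Fin n) ℝ) (B : Matrix (Fin n) (Fin m) ℝ)
    (C : Matrix (Fin p) (Fin n) ℝ)
    (M α : ℝ) (hM : 0 < M) (hα : 0 < α)
    (hdecay : ∀ t : ℝ, 0 ≤ t →
      ‖NormedSpace.exp (t • A)‖ ≤ M * Real.exp (-α * t))
    (hP : A * P + P * Aᵀ + B * Bᵀ = 0) :
    IsGLB {r : ℝ | ∃ X : Matrix (Fin n) (Fin n) ℝ,
        X.PosDef ∧ (-(X * Aᵀ + A * X + B * Bᵀ)).PosDef ∧ r = (C * X * Cᵀ).trace}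
      ((C * P * Cᵀ).trace) := by
  -- injectivity of the Lyapunov operator
  have hinj : Function.Injective (lyapOp A) := by
    rw [← LinearMap.ker_eq_bot, LinearMap.ker_eq_bot']
    intro S hS0
    exact lyap_inj A S hS0 M α hM hα hdecay
  -- existence of P₀ with A P₀ + P₀ Aᵀ = -1
  obtain ⟨P₀, hP₀⟩ := (LinearMap.injective_iff_surjective.mp hinj) (-1)
  set P₁ : Matrix (Fin n) (Fin n) ℝ := (1/2 : ℝ) • (P₀ + P₀ᵀ) with hP₁def
  have hP₀eq : A * P₀ + P₀ * Aᵀ = -1 := hP₀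
  have hP₁eq : A * P₁ + P₁ * Aᵀ = -1 := by
    have ht : A * P₀ᵀ + P₀ᵀ * Aᵀ = -1 := by
      have := congrArg Matrix.transpose hP₀eq
      simpa [Matrix.transpose_add, Matrix.transpose_mul, add_comm] using this
    rw [hP₁def]
    rw [Matrix.mul_smul, Matrix.smul_mul, Matrix.mul_add, Matrix.add_mul, ← smul_add]
    rw [show A * P₀ + A * P₀ᵀ + (P₀ * Aᵀ + P₀ᵀ * Aᵀ)
        = (A * P₀ + P₀ * Aᵀ) + (A * P₀ᵀ + P₀ᵀ * Aᵀ) by abel, hP₀eq, ht]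
    rw [show ((-1 : Matrix (Fin n) (Fin n) ℝ) + -1) = (2:ℝ) • (-1 : Matrix (Fin n) (Fin n) ℝ) by
      rw [two_smul]]
    rw [smul_smul]
    norm_num
  have hP₁lyap : A * P₁ + P₁ * Aᵀ + 1 = 0 := by rw [hP₁eq]; simp
  have hP₁herm : P₁.IsHermitian := by
    rw [Matrix.IsHermitian, conjTranspose_eq_transpose_of_trivial, hP₁def]
    simp [Matrix.transpose_smul, add_comm]
  have hP₁pos : ∀ x : Fin n → ℝ, x ≠ 0 → 0 < x ⬝ᵥ P₁.mulVec x := by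
    intro x hx
    refine lyap_pos A P₁ 1 hP₁lyap M α hM hα hdecay ?_ x hx
    refine Matrix.PosDef.of_dotProduct_mulVec_pos Matrix.isHermitian_one (fun v hv => ?_)
    have hvv : (0:ℝ) < v ⬝ᵥ v := by
      simpa using (dotProduct_star_self_pos_iff (v := v)).mpr hv
    simpa using hvv
  -- P is symmetric
  have hPsym : Pᵀ = P := by
    have ht : A * Pᵀ + Pᵀ * Aᵀ + B * Bᵀ = 0 := by
      have := congrArg Matrix.transpose hP
      simpa [Matrix.transpose_add, Matrix.transpose_mul, add_comm,
        Matrix.transpose_transpose] using this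
    have : lyapOp A (Pᵀ - P) = 0 := by
      show A * (Pᵀ - P) + (Pᵀ - P) * Aᵀ = 0
      rw [Matrix.mul_sub, Matrix.sub_mul]
      have h1 : A * Pᵀ + Pᵀ * Aᵀ = -(B * Bᵀ) := by
        have := ht; rwa [add_eq_zero_iff_eq_neg] at this
      have h2 : A * P + P * Aᵀ = -(B * Bᵀ) := by
        have := hP; rwa [add_eq_zero_iff_eq_neg] at this
      have : A * Pᵀ - A * P + (Pᵀ * Aᵀ - P * Aᵀ)
          = (A * Pᵀ + Pᵀ * Aᵀ) - (A * P + P * Aᵀ) := by abel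
      rw [this, h1, h2]; simp
    have h0 : Pᵀ - P = 0 := hinj (a₁ := Pᵀ - P) (a₂ := 0) (by simpa using this)
    exact sub_eq_zero.mp h0
  have hP₁sym : P₁ᵀ = P₁ := by
    rw [hP₁def]; simp [Matrix.transpose_smul, Matrix.transpose_add, add_comm]
  -- P is positive semidefinite (quadratic form)
  have hPnn : ∀ v : Fin n → ℝ, 0 ≤ v ⬝ᵥ P.mulVec v := by
    refine lyap_nonneg A P (B * Bᵀ) hP M α hM hα hdecay ?_
    intro v
    rw [← Matrix.mulVec_mulVec, Matrix.dotProduct_mulVec, ← Matrix.mulVec_transpose]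
    exact Finset.sum_nonneg fun i _ => mul_self_nonneg _
  set τ : ℝ := (C * P * Cᵀ).trace with hτ
  set τ₀ : ℝ := (C * P₁ * Cᵀ).trace with hτ₀
  have hτ₀nn : 0 ≤ τ₀ := by
    rw [hτ₀, trace_quad]
    refine Finset.sum_nonneg fun i _ => ?_
    rcases eq_or_ne (C i) 0 with h | h
    · simp [h]
    · exact (hP₁pos (C i) h).le
  constructor
  · -- lower bound
    rintro r ⟨X, hX, hneg, rfl⟩
    have hD : A * (X - P) + (X - P) * Aᵀ + -(X * Aᵀ + A * X + B * Bᵀ) = 0 := by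
      have : A * (X - P) + (X - P) * Aᵀ + -(X * Aᵀ + A * X + B * Bᵀ)
          = -(A * P + P * Aᵀ + B * Bᵀ) := by
        rw [Matrix.mul_sub, Matrix.sub_mul]; abel
      rw [this, hP]; simp
    have hDnn : ∀ v : Fin n → ℝ, 0 ≤ v ⬝ᵥ (X - P).mulVec v := by
      intro v
      rcases eq_or_ne v 0 with rfl | hv
      · simp
      · exact (lyap_pos A (X - P) _ hD M α hM hα hdecay hneg v hv).le
    have hsplit : (C * X * Cᵀ).trace = τ + (C * (X - P) * Cᵀ).trace := by
      rw [hτ, ← Matrix.trace_add]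
      congr 1
      rw [Matrix.mul_sub, Matrix.sub_mul]
      abel
    have h4 : 0 ≤ (C * (X - P) * Cᵀ).trace := by
      rw [trace_quad]; exact Finset.sum_nonneg fun i _ => hDnn (C i)
    rw [hsplit]
    linarith
  · -- greatest lower bound
    intro b hb
    refine le_of_forall_pos_le_add fun ε hε => ?_
    set δ : ℝ := ε / (τ₀ + 1) with hδdef
    have hδpos : 0 < δ := div_pos hε (by linarith)
    set X : Matrix (Fin n) (Fin n) ℝ := P + δ • P₁ with hXdef
    have hXpd : X.PosDef := by
      refine Matrix.PosDef.of_dotProduct_mulVec_pos ?_ ?_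
      · rw [Matrix.IsHermitian, conjTranspose_eq_transpose_of_trivial]
        rw [hXdef]
        simp [Matrix.transpose_add, Matrix.transpose_smul, hPsym, hP₁sym]
      · intro v hv
        have h1 : 0 ≤ v ⬝ᵥ P.mulVec v := hPnn v
        have h2 : 0 < v ⬝ᵥ P₁.mulVec v := hP₁pos v hv
        have : star v ⬝ᵥ X.mulVec v = v ⬝ᵥ P.mulVec v + δ * (v ⬝ᵥ P₁.mulVec v) := by
          rw [hXdef]
          simp [Matrix.add_mulVec, Matrix.smul_mulVec, dotProduct_add,
            dotProduct_smul, smul_eq_mul]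
        rw [this]
        nlinarith
    have hXneg : -(X * Aᵀ + A * X + B * Bᵀ) = δ • (1 : Matrix (Fin n) (Fin n) ℝ) := by
      have hexpand : X * Aᵀ + A * X + B * Bᵀ
          = (A * P + P * Aᵀ + B * Bᵀ) + δ • (A * P₁ + P₁ * Aᵀ) := by
        rw [hXdef, Matrix.add_mul, Matrix.mul_add, Matrix.smul_mul, Matrix.mul_smul,
          smul_add]
        abel
      rw [hexpand, hP, hP₁eq]
      simp
    have hXnegpd : (-(X * Aᵀ + A * X + B * Bᵀ)).PosDef := by
      rw [hXneg]
      refine Matrix.PosDef.of_dotProduct_mulVec_pos ?_ ?_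
      · rw [Matrix.IsHermitian, conjTranspose_eq_transpose_of_trivial]
        simp [Matrix.transpose_smul]
      · intro v hv
        have hvv : 0 < v ⬝ᵥ v := by
          have := Matrix.dotProduct_star_self_pos_iff (v := v) |>.mpr hv
          simpa using this
        have : star v ⬝ᵥ (δ • (1 : Matrix (Fin n) (Fin n) ℝ)).mulVec v = δ * (v ⬝ᵥ v) := by
          simp [Matrix.smul_mulVec, Matrix.one_mulVec, dotProduct_smul, smul_eq_mul]
        rw [this]
        positivity
    have hval : (C * X * Cᵀ).trace = τ + δ * τ₀ := by
      rw [hXdef, Matrix.mul_add, Matrix.add_mul, Matrix.trace_add, hτ, hτ₀]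
      congr 1
      rw [Matrix.mul_smul, Matrix.smul_mul, Matrix.trace_smul]
      simp [smul_eq_mul]
    have hmem : τ + δ * τ₀ ∈ {r : ℝ | ∃ X : Matrix (Fin n) (Fin n) ℝ,
        X.PosDef ∧ (-(X * Aᵀ + A * X + B * Bᵀ)).PosDef ∧ r = (C * X * Cᵀ).trace} :=
      ⟨X, hXpd, hXnegpd, hval.symm⟩
    have hble := hb hmem
    have hcancel : δ * (τ₀ + 1) = ε := div_mul_cancel₀ ε (by linarith)
    have : δ * τ₀ ≤ ε := by nlinarith
    linarith
end

section
/- Let P be a symmetric positive definite n×n real matrix and let M be a p×n real matrix and N a q×n real matrix with N ≠ 0. Then tr(M·P·Mᵀ) / tr(N·P·Nᵀ) ≤ κ(P) · ‖M‖_F² / ‖N‖_F², where κ(P) = λ_max(P)/λ_min(P) is the condition number of P (in particular tr(N·P·Nᵀ) > 0, so the left-hand side is well defined). -/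
open Matrix

lemma tr_mul_diag_mul_transpose' {m n : ℕ} (B : Matrix (Fin m) (Fin n) ℝ) (d : Fin n → ℝ) :
    (B * Matrix.diagonal d * Bᵀ).trace = ∑ j, d j * ∑ i, (B i j)^2 := by
  simp [Matrix.trace, Matrix.diag, Matrix.mul_apply, Finset.mul_sum, Finset.sum_mul]
  rw [Finset.sum_comm]
  congr 1; ext j; congr 1; ext i
  simp [Matrix.diagonal_apply, mul_ite, ite_mul]
  ring

lemma tr_transpose_mul' {m n : ℕ} (B : Matrix (Fin m) (Fin n) ℝ) :
    (Bᵀ * B).trace = ∑ j, ∑ i, (B i j)^2 := by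
  simp [Matrix.trace, Matrix.diag, Matrix.mul_apply, sq]

lemma key_bounds {m n : ℕ} [Nonempty (Fin n)] (P : Matrix (Fin n) (Fin n) ℝ) (hP : P.PosDef)
    (A : Matrix (Fin m) (Fin n) ℝ) :
    (⨅ i, hP.1.eigenvalues i) * (Aᵀ * A).trace ≤ (A * P * Aᵀ).trace ∧
      (A * P * Aᵀ).trace ≤ (⨆ i, hP.1.eigenvalues i) * (Aᵀ * A).trace := by
  set U : Matrix (Fin n) (Fin n) ℝ := (hP.1.eigenvectorUnitary : Matrix (Fin n) (Fin n) ℝ) with hUdef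
  have hstar : star U = Uᵀ := by
    ext i j; simp [Matrix.star_eq_conjTranspose, Matrix.conjTranspose_apply]
  have hspec : P = U * Matrix.diagonal hP.1.eigenvalues * Uᵀ := by
    have h := hP.1.spectral_theorem
    rw [Unitary.conjStarAlgAut_apply, ← hUdef, hstar] at h
    simpa using h
  have hU1 : U * Uᵀ = 1 := by
    rw [← hstar]; exact Matrix.mem_unitaryGroup_iff.mp hP.1.eigenvectorUnitary.2
  have h1 : (A * P * Aᵀ).trace
      = ((A * U) * Matrix.diagonal hP.1.eigenvalues * (A * U)ᵀ).trace := by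
    conv_lhs => rw [hspec]
    simp only [Matrix.transpose_mul, Matrix.mul_assoc]
  have h2 : (Aᵀ * A).trace = ((A * U)ᵀ * (A * U)).trace := by
    rw [show ((A * U)ᵀ * (A * U)).trace = ((Aᵀ * (A * U)) * Uᵀ).trace from by
      rw [Matrix.transpose_mul, Matrix.mul_assoc, Matrix.trace_mul_comm],
      Matrix.mul_assoc, Matrix.mul_assoc, hU1, Matrix.mul_one]
  rw [h1, h2, tr_mul_diag_mul_transpose', tr_transpose_mul', Finset.mul_sum, Finset.mul_sum]
  have hsq : ∀ j : Fin n, (0:ℝ) ≤ ∑ i, ((A * U) i j)^2 := fun j =>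
    Finset.sum_nonneg fun i _ => sq_nonneg _
  constructor
  · exact Finset.sum_le_sum fun j _ => mul_le_mul_of_nonneg_right
      (ciInf_le (Set.Finite.bddBelow (Set.finite_range _)) j) (hsq j)
  · exact Finset.sum_le_sum fun j _ => mul_le_mul_of_nonneg_right
      (le_ciSup (Set.Finite.bddAbove (Set.finite_range _)) j) (hsq j)

/-- For a symmetric positive definite `P`, a `p×n` matrix `M` and a nonzero
`q×n` matrix `N`, one has `tr(N·P·Nᵀ) > 0` and
`tr(M·P·Mᵀ)/tr(N·P·Nᵀ) ≤ κ(P)·‖M‖_F²/‖N‖_F²`, where `κ(P) = λ_max(P)/λ_min(P)`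
and `‖M‖_F² = tr(Mᵀ·M)`. -/
theorem stmt_7 {n p q : ℕ} (P : Matrix (Fin n) (Fin n) ℝ) (hP : P.PosDef)
    (M : Matrix (Fin p) (Fin n) ℝ) (N : Matrix (Fin q) (Fin n) ℝ) (hN : N ≠ 0) :
    0 < (N * P * Nᵀ).trace ∧
      (M * P * Mᵀ).trace / (N * P * Nᵀ).trace ≤
        ((⨆ i, hP.1.eigenvalues i) / (⨅ i, hP.1.eigenvalues i)) *
          (Mᵀ * M).trace / (Nᵀ * N).trace := by
  have hn : n ≠ 0 := by rintro rfl; exact hN (by ext i j; exact j.elim0)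
  haveI : Nonempty (Fin n) := ⟨⟨0, Nat.pos_of_ne_zero hn⟩⟩
  set a := ⨅ i, hP.1.eigenvalues i with ha
  set b := ⨆ i, hP.1.eigenvalues i with hb
  have hapos : 0 < a := by
    obtain ⟨i0, hi0⟩ := Finite.exists_min hP.1.eigenvalues
    have : a = hP.1.eigenvalues i0 :=
      le_antisymm (ciInf_le (Set.Finite.bddBelow (Set.finite_range _)) i0) (le_ciInf hi0)
    rw [this]; exact hP.eigenvalues_pos i0
  have hab : a ≤ b := le_trans
    (ciInf_le (Set.Finite.bddBelow (Set.finite_range _)) Classical.ofNonempty)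
    (le_ciSup (Set.Finite.bddAbove (Set.finite_range _)) Classical.ofNonempty)
  have hbpos : 0 < b := lt_of_lt_of_le hapos hab
  have hNtr : 0 < (Nᵀ * N).trace := by
    rw [tr_transpose_mul']
    obtain ⟨i0, hi0⟩ : ∃ i, N i ≠ 0 := Function.ne_iff.mp hN
    obtain ⟨j0, hj0⟩ : ∃ j, N i0 j ≠ 0 := Function.ne_iff.mp hi0
    exact Finset.sum_pos' (fun j _ => Finset.sum_nonneg fun i _ => sq_nonneg _)
      ⟨j0, Finset.mem_univ _,
        Finset.sum_pos' (fun i _ => sq_nonneg _) ⟨i0, Finset.mem_univ _, by positivity⟩⟩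
  have hMtr : 0 ≤ (Mᵀ * M).trace := by
    rw [tr_transpose_mul']
    exact Finset.sum_nonneg fun j _ => Finset.sum_nonneg fun i _ => sq_nonneg _
  have hKM := key_bounds P hP M
  have hKN := key_bounds P hP N
  have hden : 0 < a * (Nᵀ * N).trace := mul_pos hapos hNtr
  refine ⟨lt_of_lt_of_le hden hKN.1, ?_⟩
  have h1 : (M * P * Mᵀ).trace / (N * P * Nᵀ).trace ≤
      (b * (Mᵀ * M).trace) / (a * (Nᵀ * N).trace) :=
    div_le_div₀ (mul_nonneg hbpos.le hMtr) hKM.2 hden hKN.1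
  refine h1.trans_eq ?_
  rw [div_mul_eq_mul_div, div_div]
end

section
/- Let P be a symmetric positive definite n×n real matrix and let P_R be a symmetric n×n real matrix such that ‖P_R − P‖₂ ≤ δ·‖P‖₂ for some δ ∈ [0,1) with δ·κ(P) < 1, where κ(P) = λ_max(P)/λ_min(P). Then λ_min(P_R) ≥ λ_min(P)·(1 − δ·κ(P)) > 0 (so P_R is positive definite), ‖P_R‖₂ ≤ (1+δ)·‖P‖₂, and κ(P_R) ≤ κ(P)·(1+δ)/(1 − δ·κ(P)). -/
open Matrix
open scoped Matrix.Norms.L2Operator RealInnerProductSpace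

set_option linter.unusedSectionVars false

namespace Stmt8Aux

variable {n : ℕ} [NeZero n]

lemma mulVec_norm_le (M : Matrix (Fin n) (Fin n) ℝ) (x : EuclideanSpace ℝ (Fin n)) :
    ‖Matrix.toEuclideanLin M x‖ ≤ ‖M‖ * ‖x‖ := by
  rw [Matrix.l2_opNorm_def]
  exact (LinearMap.toContinuousLinearMap (Matrix.toEuclideanLin M)).le_opNorm x

lemma toEuclideanLin_eigenvectorBasis {A : Matrix (Fin n) (Fin n) ℝ} (hA : A.IsHermitian)
    (i : Fin n) :
    Matrix.toEuclideanLin A (hA.eigenvectorBasis i) =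
      hA.eigenvalues i • hA.eigenvectorBasis i := by
  apply (WithLp.equiv 2 (Fin n → ℝ)).injective
  simp only [Matrix.toEuclideanLin_apply, Equiv.apply_symm_apply]
  have := hA.mulVec_eigenvectorBasis i
  simpa using this

lemma quad_eq_sum {A : Matrix (Fin n) (Fin n) ℝ} (hA : A.IsHermitian)
    (x : EuclideanSpace ℝ (Fin n)) :
    ⟪x, Matrix.toEuclideanLin A x⟫ =
      ∑ i, hA.eigenvalues i * ⟪x, hA.eigenvectorBasis i⟫ ^ 2 := by
  have hsym := (Matrix.isHermitian_iff_isSymmetric.mp hA)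
  rw [← hA.eigenvectorBasis.sum_inner_mul_inner x (Matrix.toEuclideanLin A x)]
  refine Finset.sum_congr rfl fun i _ => ?_
  have h1 : ⟪hA.eigenvectorBasis i, Matrix.toEuclideanLin A x⟫
      = hA.eigenvalues i * ⟪hA.eigenvectorBasis i, x⟫ := by
    rw [← hsym (hA.eigenvectorBasis i) x, toEuclideanLin_eigenvectorBasis hA i,
      real_inner_smul_left]
  rw [h1, real_inner_comm (hA.eigenvectorBasis i) x]
  ring

lemma parseval {A : Matrix (Fin n) (Fin n) ℝ} (hA : A.IsHermitian)
    (x : EuclideanSpace ℝ (Fin n)) :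
    ∑ i, ⟪x, hA.eigenvectorBasis i⟫ ^ 2 = ‖x‖ ^ 2 := by
  have := hA.eigenvectorBasis.sum_inner_mul_inner x x
  rw [real_inner_self_eq_norm_sq] at this
  rw [← this]
  refine Finset.sum_congr rfl fun i _ => ?_
  rw [real_inner_comm (hA.eigenvectorBasis i) x]
  ring

lemma rayleigh_lower {A : Matrix (Fin n) (Fin n) ℝ} (hA : A.IsHermitian)
    (x : EuclideanSpace ℝ (Fin n)) :
    (⨅ i, hA.eigenvalues i) * ‖x‖ ^ 2 ≤ ⟪x, Matrix.toEuclideanLin A x⟫ := by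
  rw [quad_eq_sum hA x, ← parseval hA x, Finset.mul_sum]
  refine Finset.sum_le_sum fun i _ => ?_
  exact mul_le_mul_of_nonneg_right (ciInf_le (Finite.bddBelow_range _) i) (sq_nonneg _)

lemma eig_ge_of_forall {A : Matrix (Fin n) (Fin n) ℝ} (hA : A.IsHermitian) (c : ℝ)
    (h : ∀ x : EuclideanSpace ℝ (Fin n), c * ‖x‖ ^ 2 ≤ ⟪x, Matrix.toEuclideanLin A x⟫)
    (i : Fin n) : c ≤ hA.eigenvalues i := by
  have hx := h (hA.eigenvectorBasis i)
  have hn : ‖hA.eigenvectorBasis i‖ = 1 := hA.eigenvectorBasis.orthonormal.1 i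
  rw [toEuclideanLin_eigenvectorBasis hA i, real_inner_smul_right,
    real_inner_self_eq_norm_sq, hn] at hx
  simpa using hx

lemma abs_eig_le_norm {A : Matrix (Fin n) (Fin n) ℝ} (hA : A.IsHermitian) (i : Fin n) :
    |hA.eigenvalues i| ≤ ‖A‖ := by
  have h := mulVec_norm_le A (hA.eigenvectorBasis i)
  have hn : ‖hA.eigenvectorBasis i‖ = 1 := hA.eigenvectorBasis.orthonormal.1 i
  rw [toEuclideanLin_eigenvectorBasis hA i, norm_smul, hn, mul_one, mul_one,
    Real.norm_eq_abs] at h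
  exact h

lemma norm_le_sup_abs {A : Matrix (Fin n) (Fin n) ℝ} (hA : A.IsHermitian) :
    ‖A‖ ≤ ⨆ i, |hA.eigenvalues i| := by
  have hne : Nonempty (Fin n) := inferInstance
  set C := ⨆ i, |hA.eigenvalues i| with hC
  have hC0 : 0 ≤ C := (abs_nonneg (hA.eigenvalues (Classical.arbitrary (Fin n)))).trans
    (le_ciSup (f := fun i => |hA.eigenvalues i|) (Finite.bddAbove_range _) _)
  rw [Matrix.l2_opNorm_def]
  refine ContinuousLinearMap.opNorm_le_bound _ hC0 fun x => ?_
  have key : ‖Matrix.toEuclideanLin A x‖ ^ 2 ≤ (C * ‖x‖) ^ 2 := by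
    have hrepr : ∀ (y : EuclideanSpace ℝ (Fin n)),
        ‖y‖ ^ 2 = ∑ i, (hA.eigenvectorBasis.repr y i) ^ 2 := by
      intro y
      rw [← hA.eigenvectorBasis.repr.norm_map y, EuclideanSpace.norm_eq]
      rw [Real.sq_sqrt (by positivity)]
      refine Finset.sum_congr rfl fun i _ => ?_
      rw [Real.norm_eq_abs, sq_abs]
    rw [hrepr, mul_pow, hrepr x, Finset.mul_sum]
    refine Finset.sum_le_sum fun i _ => ?_
    have h1 : hA.eigenvectorBasis.repr (Matrix.toEuclideanLin A x) i
        = hA.eigenvalues i * hA.eigenvectorBasis.repr x i := by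
      rw [hA.eigenvectorBasis.repr_apply_apply, hA.eigenvectorBasis.repr_apply_apply,
        ← (Matrix.isHermitian_iff_isSymmetric.mp hA) (hA.eigenvectorBasis i) x,
        toEuclideanLin_eigenvectorBasis hA i, real_inner_smul_left]
    rw [h1, mul_pow]
    have h2 : hA.eigenvalues i ^ 2 ≤ C ^ 2 := by
      rw [← sq_abs]
      exact pow_le_pow_left₀ (abs_nonneg _) (le_ciSup (f := fun j => |hA.eigenvalues j|) (Finite.bddAbove_range _) i) 2
    exact mul_le_mul_of_nonneg_right h2 (sq_nonneg _)
  calc ‖Matrix.toEuclideanLin A x‖ = Real.sqrt (‖Matrix.toEuclideanLin A x‖ ^ 2) :=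
        (Real.sqrt_sq (norm_nonneg _)).symm
    _ ≤ Real.sqrt ((C * ‖x‖) ^ 2) := Real.sqrt_le_sqrt key
    _ = C * ‖x‖ := Real.sqrt_sq (by positivity)


lemma quad_dot (A : Matrix (Fin n) (Fin n) ℝ) (x : Fin n → ℝ) :
    ⟪((WithLp.equiv 2 (Fin n → ℝ)).symm x),
      Matrix.toEuclideanLin A ((WithLp.equiv 2 (Fin n → ℝ)).symm x)⟫ =
      dotProduct (star x) (A *ᵥ x) := by
  simp [Matrix.toEuclideanLin_apply, PiLp.inner_apply, RCLike.inner_apply, dotProduct, mul_comm]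


end Stmt8Aux



/-- Let `P` be symmetric positive definite and `P_R` symmetric with
`‖P_R − P‖₂ ≤ δ·‖P‖₂` for some `δ ∈ [0,1)` with `δ·κ(P) < 1`, where
`κ(P) = λ_max(P)/λ_min(P)`.  Then `λ_min(P_R) ≥ λ_min(P)·(1 − δ·κ(P)) > 0`
(so `P_R` is positive definite), `‖P_R‖₂ ≤ (1+δ)·‖P‖₂`, and
`κ(P_R) ≤ κ(P)·(1+δ)/(1 − δ·κ(P))`. -/
theorem stmt_8 {n : ℕ} [NeZero n] (P P_R : Matrix (Fin n) (Fin n) ℝ)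
    (hP : P.PosDef) (hPR : P_R.IsHermitian) (δ : ℝ)
    (hδ0 : 0 ≤ δ) (hδ1 : δ < 1)
    (hδκ : δ * ((⨆ i, hP.1.eigenvalues i) / (⨅ i, hP.1.eigenvalues i)) < 1)
    (hpert : ‖P_R - P‖ ≤ δ * ‖P‖) :
    ((⨅ i, hP.1.eigenvalues i) *
        (1 - δ * ((⨆ i, hP.1.eigenvalues i) / (⨅ i, hP.1.eigenvalues i)))
        ≤ ⨅ i, hPR.eigenvalues i) ∧
    (0 < (⨅ i, hP.1.eigenvalues i) *
        (1 - δ * ((⨆ i, hP.1.eigenvalues i) / (⨅ i, hP.1.eigenvalues i)))) ∧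
    P_R.PosDef ∧
    ‖P_R‖ ≤ (1 + δ) * ‖P‖ ∧
    (⨆ i, hPR.eigenvalues i) / (⨅ i, hPR.eigenvalues i) ≤
      ((⨆ i, hP.1.eigenvalues i) / (⨅ i, hP.1.eigenvalues i)) * (1 + δ) /
        (1 - δ * ((⨆ i, hP.1.eigenvalues i) / (⨅ i, hP.1.eigenvalues i))) := by
  classical
  set a := ⨅ i, hP.1.eigenvalues i with ha_def
  set s := ⨆ i, hP.1.eigenvalues i with hs_def
  set μ := ⨅ i, hPR.eigenvalues i with hμ_def
  set ν := ⨆ i, hPR.eigenvalues i with hν_def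
  have halow : ∀ i, a ≤ hP.1.eigenvalues i := fun i => ciInf_le (Finite.bddBelow_range _) i
  have hups : ∀ i, hP.1.eigenvalues i ≤ s := fun i => le_ciSup (Finite.bddAbove_range _) i
  have ha : 0 < a := by
    obtain ⟨j, hj⟩ := Finite.exists_min (hP.1.eigenvalues)
    have : a = hP.1.eigenvalues j := le_antisymm (halow j) (le_ciInf hj)
    rw [this]; exact hP.eigenvalues_pos j
  have hs : 0 < s := ha.trans_le ((halow (Classical.arbitrary (Fin n))).trans
    (hups (Classical.arbitrary (Fin n))))
  have hPs : ‖P‖ ≤ s := (Stmt8Aux.norm_le_sup_abs hP.1).trans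
    (ciSup_le fun i => by rw [abs_of_pos (hP.eigenvalues_pos i)]; exact hups i)
  have hκpos : 0 < 1 - δ * (s / a) := by linarith
  set c := a * (1 - δ * (s / a)) with hc_def
  have hc_pos : 0 < c := mul_pos ha hκpos
  have hc_eq : c = a - δ * s := by rw [hc_def]; field_simp
  -- quadratic lower bound for P_R
  have hquadPR : ∀ x : EuclideanSpace ℝ (Fin n),
      c * ‖x‖ ^ 2 ≤ ⟪x, Matrix.toEuclideanLin P_R x⟫ := by
    intro x
    have h1 : ⟪x, Matrix.toEuclideanLin P_R x⟫ =
        ⟪x, Matrix.toEuclideanLin P x⟫ + ⟪x, Matrix.toEuclideanLin (P_R - P) x⟫ := by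
      have hsub : Matrix.toEuclideanLin (P_R - P) x
          = Matrix.toEuclideanLin P_R x - Matrix.toEuclideanLin P x := by
        simp [map_sub, LinearMap.sub_apply]
      rw [hsub, inner_sub_right]; ring
    have h2 : |⟪x, Matrix.toEuclideanLin (P_R - P) x⟫| ≤ δ * ‖P‖ * ‖x‖ ^ 2 := by
      calc |⟪x, Matrix.toEuclideanLin (P_R - P) x⟫|
          ≤ ‖x‖ * ‖Matrix.toEuclideanLin (P_R - P) x‖ := abs_real_inner_le_norm _ _
        _ ≤ ‖x‖ * (‖P_R - P‖ * ‖x‖) := by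
            exact mul_le_mul_of_nonneg_left (Stmt8Aux.mulVec_norm_le _ _) (norm_nonneg _)
        _ ≤ ‖x‖ * (δ * ‖P‖ * ‖x‖) := by
            refine mul_le_mul_of_nonneg_left ?_ (norm_nonneg _)
            exact mul_le_mul_of_nonneg_right hpert (norm_nonneg _)
        _ = δ * ‖P‖ * ‖x‖ ^ 2 := by ring
    have h3 := Stmt8Aux.rayleigh_lower hP.1 x
    rw [← ha_def] at h3
    have h4 : δ * ‖P‖ * ‖x‖ ^ 2 ≤ δ * s * ‖x‖ ^ 2 := by
      have : δ * ‖P‖ ≤ δ * s := mul_le_mul_of_nonneg_left hPs hδ0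
      exact mul_le_mul_of_nonneg_right this (sq_nonneg _)
    have h5 := abs_le.mp h2
    rw [h1, hc_eq]
    nlinarith [h3, h5.1]
  have hμc : c ≤ μ := le_ciInf (Stmt8Aux.eig_ge_of_forall hPR c hquadPR)
  have hPRpos : P_R.PosDef := by
    refine Matrix.PosDef.of_dotProduct_mulVec_pos hPR fun x hx => ?_
    rw [← Stmt8Aux.quad_dot]
    set x' := (WithLp.equiv 2 (Fin n → ℝ)).symm x with hx'_def
    have hx' : x' ≠ 0 := by
      intro h
      exact hx (by simpa [hx'_def] using congrArg (WithLp.equiv 2 (Fin n → ℝ)) h)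
    have hn : 0 < ‖x'‖ := norm_pos_iff.mpr hx'
    calc (0 : ℝ) < c * ‖x'‖ ^ 2 := by positivity
      _ ≤ _ := hquadPR x'
  have h4 : ‖P_R‖ ≤ (1 + δ) * ‖P‖ := by
    have h := norm_add_le P (P_R - P)
    rw [add_sub_cancel] at h
    nlinarith [norm_nonneg P]
  have hν : ν ≤ (1 + δ) * s := ciSup_le fun i =>
    (le_abs_self _).trans ((Stmt8Aux.abs_eig_le_norm hPR i).trans
      (h4.trans (mul_le_mul_of_nonneg_left hPs (by linarith))))
  have hν0 : 0 ≤ (1 + δ) * s := by positivity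
  have hfinal : ν / μ ≤ ((1 + δ) * s) / c := div_le_div₀ hν0 hν hc_pos hμc
  refine ⟨hμc, hc_pos, hPRpos, h4, ?_⟩
  calc ν / μ ≤ ((1 + δ) * s) / c := hfinal
    _ = s / a * (1 + δ) / (1 - δ * (s / a)) := by
        rw [hc_def]; field_simp
end

section
/- (Theorem 1) Let P be a symmetric positive definite n×n real matrix with condition number κ(P) = λ_max(P)/λ_min(P), and let P_R be a symmetric n×n real matrix such that ‖P_R − P‖₂ ≤ δ·‖P‖₂ for some δ ∈ [0,1) satisfying δ·κ(P) < 1. Let C_p be a p×n real matrix, and let E_R be a q×k real matrix and C_r a q×(n−k) real matrix, not both zero, and let C_{r,R} = [E_R, C_r] be the q×n matrix formed by placing E_R and C_r side by side (so that ‖C_{r,R}‖_F² = ‖E_R‖_F² + ‖C_r‖_F²). Then tr(C_p·P_R·C_pᵀ) / tr(C_{r,R}·P_R·C_{r,R}ᵀ) ≤ [κ(P)·(1+δ)/(1 − δ·κ(P))] · ‖C_p‖_F² / (‖E_R‖_F² + ‖C_r‖_F²), and in particular tr(C_{r,R}·P_R·C_{r,R}ᵀ) > 0 so the ratio is well defined.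 -/
open Matrix
open scoped Matrix.Norms.L2Operator

open scoped InnerProductSpace
set_option linter.unusedSectionVars false
set_option linter.unusedVariables false

variable {n m : Type*} [Fintype n] [DecidableEq n] [Fintype m]

noncomputable def ee (x : n → ℝ) : EuclideanSpace ℝ n := (WithLp.equiv 2 (n → ℝ)).symm x

lemma inner_ee (u v : n → ℝ) : ⟪ee u, ee v⟫_ℝ = u ⬝ᵥ v := by
  simp [ee, PiLp.inner_apply, RCLike.inner_apply, dotProduct, mul_comm]

lemma dot_self_ee (u : n → ℝ) : u ⬝ᵥ u = ‖ee u‖ ^ 2 := by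
  rw [← inner_ee, real_inner_self_eq_norm_sq]

lemma eig_dot (A : Matrix n n ℝ) (hA : A.IsHermitian) (x : n → ℝ) (j : n) :
    ⟪hA.eigenvectorBasis j, ee (A *ᵥ x)⟫_ℝ
      = hA.eigenvalues j * ⟪hA.eigenvectorBasis j, ee x⟫_ℝ := by
  have hsym : Aᵀ = A := by rw [← A.conjTranspose_eq_transpose_of_trivial]; exact hA.eq
  have hb : (WithLp.equiv 2 ((i : n) → ℝ)) (hA.eigenvectorBasis j) ⬝ᵥ (A *ᵥ x)
      = (hA.eigenvalues j • (WithLp.equiv 2 ((i : n) → ℝ)) (hA.eigenvectorBasis j)) ⬝ᵥ x := by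
    rw [dotProduct_mulVec, ← mulVec_transpose, hsym, WithLp.equiv_apply, hA.mulVec_eigenvectorBasis]
  have h1 : ⟪hA.eigenvectorBasis j, ee (A *ᵥ x)⟫_ℝ
      = (WithLp.equiv 2 ((i : n) → ℝ)) (hA.eigenvectorBasis j) ⬝ᵥ (A *ᵥ x) := by
    rw [← inner_ee]; rfl
  have h2 : ⟪hA.eigenvectorBasis j, ee x⟫_ℝ
      = (WithLp.equiv 2 ((i : n) → ℝ)) (hA.eigenvectorBasis j) ⬝ᵥ x := by
    rw [← inner_ee]; rfl
  rw [h1, h2, hb, smul_dotProduct]; rfl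

lemma quad_repr (A : Matrix n n ℝ) (hA : A.IsHermitian) (x : n → ℝ) :
    x ⬝ᵥ (A *ᵥ x) = ∑ j, hA.eigenvalues j * (⟪hA.eigenvectorBasis j, ee x⟫_ℝ) ^ 2 := by
  rw [← inner_ee, ← (hA.eigenvectorBasis).sum_inner_mul_inner (ee x) (ee (A *ᵥ x))]
  refine Finset.sum_congr rfl fun j _ => ?_
  rw [eig_dot A hA x j, real_inner_comm (ee x)]
  ring

lemma dot_self_repr (A : Matrix n n ℝ) (hA : A.IsHermitian) (x : n → ℝ) :
    x ⬝ᵥ x = ∑ j, (⟪hA.eigenvectorBasis j, ee x⟫_ℝ) ^ 2 := by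
  rw [← inner_ee, ← (hA.eigenvectorBasis).sum_inner_mul_inner (ee x) (ee x)]
  refine Finset.sum_congr rfl fun j _ => ?_
  rw [real_inner_comm (ee x)]; ring

lemma mulvec_self_repr (A : Matrix n n ℝ) (hA : A.IsHermitian) (x : n → ℝ) :
    (A *ᵥ x) ⬝ᵥ (A *ᵥ x)
      = ∑ j, (hA.eigenvalues j * ⟪hA.eigenvectorBasis j, ee x⟫_ℝ) ^ 2 := by
  rw [← inner_ee, ← (hA.eigenvectorBasis).sum_inner_mul_inner (ee (A *ᵥ x)) (ee (A *ᵥ x))]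
  refine Finset.sum_congr rfl fun j _ => ?_
  rw [show (⟪ee (A *ᵥ x), hA.eigenvectorBasis j⟫_ℝ)
      = hA.eigenvalues j * ⟪hA.eigenvectorBasis j, ee x⟫_ℝ from
    (real_inner_comm _ _).trans (eig_dot A hA x j),
    show (⟪hA.eigenvectorBasis j, ee (A *ᵥ x)⟫_ℝ)
      = hA.eigenvalues j * ⟪hA.eigenvectorBasis j, ee x⟫_ℝ from eig_dot A hA x j]
  ring

-- |xᵀ M x| ≤ ‖M‖ * (x ⬝ᵥ x)
lemma abs_quad_le (M : Matrix n n ℝ) (x : n → ℝ) :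
    |x ⬝ᵥ (M *ᵥ x)| ≤ ‖M‖ * (x ⬝ᵥ x) := by
  have hmv : ‖ee (M *ᵥ x)‖ ≤ ‖M‖ * ‖ee x‖ := by
    have := M.l2_opNorm_mulVec (ee x)
    exact this
  have h1 : |x ⬝ᵥ (M *ᵥ x)| = |⟪ee x, ee (M *ᵥ x)⟫_ℝ| := by rw [inner_ee]
  rw [h1, dot_self_ee]
  calc |⟪ee x, ee (M *ᵥ x)⟫_ℝ| ≤ ‖ee x‖ * ‖ee (M *ᵥ x)‖ := abs_real_inner_le_norm _ _
    _ ≤ ‖ee x‖ * (‖M‖ * ‖ee x‖) := by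
        exact mul_le_mul_of_nonneg_left hmv (norm_nonneg _)
    _ = ‖M‖ * ‖ee x‖ ^ 2 := by ring

lemma quad_le_sup [Nonempty n] (A : Matrix n n ℝ) (hA : A.IsHermitian) (x : n → ℝ) :
    x ⬝ᵥ (A *ᵥ x) ≤ (⨆ i, hA.eigenvalues i) * (x ⬝ᵥ x) := by
  rw [quad_repr A hA, dot_self_repr A hA, Finset.mul_sum]
  refine Finset.sum_le_sum fun j _ => ?_
  exact mul_le_mul_of_nonneg_right (le_ciSup (Set.Finite.bddAbove (Set.finite_range _)) j)
    (sq_nonneg _)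

lemma inf_le_quad [Nonempty n] (A : Matrix n n ℝ) (hA : A.IsHermitian) (x : n → ℝ) :
    (⨅ i, hA.eigenvalues i) * (x ⬝ᵥ x) ≤ x ⬝ᵥ (A *ᵥ x) := by
  rw [quad_repr A hA, dot_self_repr A hA, Finset.mul_sum]
  refine Finset.sum_le_sum fun j _ => ?_
  exact mul_le_mul_of_nonneg_right (ciInf_le (Set.Finite.bddBelow (Set.finite_range _)) j)
    (sq_nonneg _)

lemma posdef_norm_le [Nonempty n] (A : Matrix n n ℝ) (hA : A.PosDef) :
    ‖A‖ ≤ ⨆ i, hA.1.eigenvalues i := by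
  set c := ⨆ i, hA.1.eigenvalues i with hc
  have hc0 : 0 < c :=
    lt_of_lt_of_le (hA.eigenvalues_pos (Classical.arbitrary n))
      (le_ciSup (Set.Finite.bddAbove (Set.finite_range _)) _)
  rw [Matrix.l2_opNorm_def]
  apply ContinuousLinearMap.opNorm_le_bound _ hc0.le
  intro x
  set w : n → ℝ := (WithLp.equiv 2 (n → ℝ)) x with hw
  have hx : ((Matrix.toEuclideanLin.trans LinearMap.toContinuousLinearMap) A) x
      = ee (A *ᵥ w) := rfl
  have hxx : x = ee w := rfl
  rw [hx, hxx]
  have h1 : ‖ee (A *ᵥ w)‖ ^ 2 ≤ c ^ 2 * ‖ee w‖ ^ 2 := by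
    rw [← dot_self_ee, ← dot_self_ee, mulvec_self_repr A hA.1, dot_self_repr A hA.1,
      Finset.mul_sum]
    refine Finset.sum_le_sum fun j _ => ?_
    have h2 : hA.1.eigenvalues j ≤ c := le_ciSup (Set.Finite.bddAbove (Set.finite_range _)) j
    have h3 : 0 < hA.1.eigenvalues j := hA.eigenvalues_pos j
    rw [mul_pow]
    exact mul_le_mul_of_nonneg_right (by nlinarith) (sq_nonneg _)
  nlinarith [norm_nonneg (ee (A *ᵥ w)), norm_nonneg (ee w), mul_nonneg hc0.le (norm_nonneg (ee w))]

lemma trace_AMAt (A : Matrix m n ℝ) (M : Matrix n n ℝ) :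
    (A * M * Aᵀ).trace = ∑ i, (fun j => A i j) ⬝ᵥ (M *ᵥ fun j => A i j) := by
  simp only [Matrix.trace, Matrix.diag, Matrix.mul_apply, Matrix.transpose_apply,
    dotProduct, Matrix.mulVec, Finset.sum_mul, Finset.mul_sum]
  refine Finset.sum_congr rfl fun i _ => ?_
  rw [Finset.sum_comm]
  exact Finset.sum_congr rfl fun j _ => Finset.sum_congr rfl fun k _ => by ring

lemma trace_AtA (A : Matrix m n ℝ) :
    (Aᵀ * A).trace = ∑ i, (fun j => A i j) ⬝ᵥ (fun j => A i j) := by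
  simp only [Matrix.trace, Matrix.diag, Matrix.mul_apply, Matrix.transpose_apply, dotProduct]
  exact Finset.sum_comm

lemma trace_AtA_nonneg (A : Matrix m n ℝ) : 0 ≤ (Aᵀ * A).trace := by
  rw [trace_AtA]
  exact Finset.sum_nonneg fun i _ => Finset.sum_nonneg fun j _ => mul_self_nonneg _

lemma trace_AtA_pos (A : Matrix m n ℝ) (hA : A ≠ 0) : 0 < (Aᵀ * A).trace := by
  rw [trace_AtA]
  have : ∃ i j, A i j ≠ 0 := by
    by_contra h
    push_neg at h
    exact hA (by ext i j; exact h i j)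
  obtain ⟨i, j, hij⟩ := this
  refine Finset.sum_pos' (fun i _ => Finset.sum_nonneg fun j _ => mul_self_nonneg _)
    ⟨i, Finset.mem_univ i, ?_⟩
  refine Finset.sum_pos' (fun j _ => mul_self_nonneg _) ⟨j, Finset.mem_univ j, ?_⟩
  exact mul_self_pos.mpr hij

/-- **Theorem 1.** Let `P` be symmetric positive definite with condition
number `κ(P) = λ_max(P)/λ_min(P)` and let `P_R` be symmetric with `‖P_R − P‖₂ ≤ δ·‖P‖₂`
for some `δ ∈ [0,1)` with `δ·κ(P) < 1`.  For any `C_p`, and `C_{r,R} = [E_R, C_r]`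
(horizontal concatenation, with `E_R`, `C_r` not both zero),
`tr(C_p·P_R·C_pᵀ)/tr(C_{r,R}·P_R·C_{r,R}ᵀ)
  ≤ [κ(P)(1+δ)/(1−δκ(P))]·‖C_p‖_F²/(‖E_R‖_F² + ‖C_r‖_F²)`,
and in particular `tr(C_{r,R}·P_R·C_{r,R}ᵀ) > 0`.  Here `‖M‖_F² = tr(Mᵀ·M)`. -/
theorem stmt_9 {k l p q : ℕ}
    (P P_R : Matrix (Fin k ⊕ Fin l) (Fin k ⊕ Fin l) ℝ)
    (hP : P.PosDef) (hPR : P_R.IsHermitian) (δ : ℝ)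
    (hδ0 : 0 ≤ δ) (hδ1 : δ < 1)
    (hδκ : δ * ((⨆ i, hP.1.eigenvalues i) / (⨅ i, hP.1.eigenvalues i)) < 1)
    (hpert : ‖P_R - P‖ ≤ δ * ‖P‖)
    (C_p : Matrix (Fin p) (Fin k ⊕ Fin l) ℝ)
    (E_R : Matrix (Fin q) (Fin k) ℝ) (C_r : Matrix (Fin q) (Fin l) ℝ)
    (hnz : ¬(E_R = 0 ∧ C_r = 0)) :
    0 < (fromCols E_R C_r * P_R * (fromCols E_R C_r)ᵀ).trace ∧
      (C_p * P_R * C_pᵀ).trace / (fromCols E_R C_r * P_R * (fromCols E_R C_r)ᵀ).trace ≤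
        ((⨆ i, hP.1.eigenvalues i) / (⨅ i, hP.1.eigenvalues i)) * (1 + δ) /
            (1 - δ * ((⨆ i, hP.1.eigenvalues i) / (⨅ i, hP.1.eigenvalues i))) *
          (C_pᵀ * C_p).trace / ((E_Rᵀ * E_R).trace + (C_rᵀ * C_r).trace) := by
  classical
  rcases isEmpty_or_nonempty (Fin k ⊕ Fin l) with he | hne
  · refine absurd ⟨?_, ?_⟩ hnz
    · ext i j; exact (he.false (Sum.inl j)).elim
    · ext i j; exact (he.false (Sum.inr j)).elim
  obtain ⟨i0⟩ := hne
  have hne : Nonempty (Fin k ⊕ Fin l) := ⟨i0⟩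
  set μ := hP.1.eigenvalues with hμ
  set a := ⨅ i, μ i with hadef
  set bb := ⨆ i, μ i with hbdef
  have ha : 0 < a := by
    obtain ⟨i1, hi1⟩ := Finite.exists_min μ
    exact lt_of_lt_of_le (hP.eigenvalues_pos i1) (le_ciInf hi1)
  have hb : a ≤ bb := le_trans (ciInf_le (Set.Finite.bddBelow (Set.finite_range _)) i0)
      (le_ciSup (Set.Finite.bddAbove (Set.finite_range _)) i0)
  have hb0 : 0 < bb := lt_of_lt_of_le ha hb
  have hpert' : ‖P_R - P‖ ≤ δ * bb :=
    hpert.trans (mul_le_mul_of_nonneg_left (posdef_norm_le P hP) hδ0)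
  have hgap : δ * bb < a := by
    have h := mul_lt_mul_of_pos_right hδκ ha
    rw [one_mul] at h
    calc δ * bb = δ * (bb / a) * a := by field_simp
    _ < a := h
  have hdz : ∀ x : (Fin k ⊕ Fin l) → ℝ, 0 ≤ x ⬝ᵥ x := fun x => by
    rw [dot_self_ee]; positivity
  have hlow : ∀ x : (Fin k ⊕ Fin l) → ℝ, (a - δ * bb) * (x ⬝ᵥ x) ≤ x ⬝ᵥ (P_R *ᵥ x) := by
    intro x
    have hs : x ⬝ᵥ (P_R *ᵥ x) = x ⬝ᵥ (P *ᵥ x) + x ⬝ᵥ ((P_R - P) *ᵥ x) := by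
      rw [Matrix.sub_mulVec, dotProduct_sub]; ring
    have h1 := inf_le_quad P hP.1 x
    have h2 := (abs_le.mp (abs_quad_le (P_R - P) x)).1
    have h4 : ‖P_R - P‖ * (x ⬝ᵥ x) ≤ δ * bb * (x ⬝ᵥ x) :=
      mul_le_mul_of_nonneg_right hpert' (hdz x)
    rw [hs]
    nlinarith
  have hhigh : ∀ x : (Fin k ⊕ Fin l) → ℝ,
      x ⬝ᵥ (P_R *ᵥ x) ≤ (bb * (1 + δ)) * (x ⬝ᵥ x) := by
    intro x
    have hs : x ⬝ᵥ (P_R *ᵥ x) = x ⬝ᵥ (P *ᵥ x) + x ⬝ᵥ ((P_R - P) *ᵥ x) := by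
      rw [Matrix.sub_mulVec, dotProduct_sub]; ring
    have h1 := quad_le_sup P hP.1 x
    have h2 := (abs_le.mp (abs_quad_le (P_R - P) x)).2
    have h4 : ‖P_R - P‖ * (x ⬝ᵥ x) ≤ δ * bb * (x ⬝ᵥ x) :=
      mul_le_mul_of_nonneg_right hpert' (hdz x)
    rw [hs]
    nlinarith
  set C := fromCols E_R C_r with hC
  have hS : (Cᵀ * C).trace = (E_Rᵀ * E_R).trace + (C_rᵀ * C_r).trace := by
    rw [Matrix.trace_mul_comm, hC, Matrix.transpose_fromCols, Matrix.fromCols_mul_fromRows,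
      Matrix.trace_add, Matrix.trace_mul_comm E_R, Matrix.trace_mul_comm C_r]
  have hCne : C ≠ 0 := by
    intro h
    refine hnz ⟨?_, ?_⟩
    · ext i j
      have := congrFun (congrFun h i) (Sum.inl j)
      simpa [hC, Matrix.fromCols] using this
    · ext i j
      have := congrFun (congrFun h i) (Sum.inr j)
      simpa [hC, Matrix.fromCols] using this
  have hS0 : 0 < (Cᵀ * C).trace := trace_AtA_pos C hCne
  have hDlow : (a - δ * bb) * (Cᵀ * C).trace ≤ (C * P_R * Cᵀ).trace := by
    rw [trace_AMAt, trace_AtA, Finset.mul_sum]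
    exact Finset.sum_le_sum fun i _ => hlow _
  have hNhigh : (C_p * P_R * C_pᵀ).trace ≤ (bb * (1 + δ)) * (C_pᵀ * C_p).trace := by
    rw [trace_AMAt, trace_AtA, Finset.mul_sum]
    exact Finset.sum_le_sum fun i _ => hhigh _
  have hD0 : 0 < (C * P_R * Cᵀ).trace :=
    lt_of_lt_of_le (mul_pos (by linarith) hS0) hDlow
  refine ⟨hD0, ?_⟩
  have hTnn : 0 ≤ (C_pᵀ * C_p).trace := trace_AtA_nonneg _
  rw [show (E_Rᵀ * E_R).trace + (C_rᵀ * C_r).trace = (Cᵀ * C).trace from hS.symm]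
  have h1mdk : 1 - δ * (bb / a) = (a - δ * bb) / a := by field_simp
  have hrhs : bb / a * (1 + δ) / (1 - δ * (bb / a)) * (C_pᵀ * C_p).trace / (Cᵀ * C).trace
      = bb * (1 + δ) * (C_pᵀ * C_p).trace / ((a - δ * bb) * (Cᵀ * C).trace) := by
    have h5 : a - δ * bb ≠ 0 := (sub_pos.mpr hgap).ne'
    have h6 : (Cᵀ * C).trace ≠ 0 := hS0.ne'
    rw [h1mdk]
    field_simp
  rw [hrhs]
  exact div_le_div₀ (mul_nonneg (mul_nonneg hb0.le (by linarith)) hTnn) hNhigh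
    (mul_pos (by linarith) hS0) hDlow
end

section
/- Let A be a nonzero n×n real matrix admitting an exponential decay bound: there exist M > 0 and α > 0 such that ‖exp(tA)‖₂ ≤ M·exp(−α t) for all t ≥ 0. Let B be an n×m real matrix for which there exists σ > 0 such that ‖Bᵀ·v‖₂ ≥ σ·‖v‖₂ for all v ∈ ℝⁿ (i.e., B has full row-rank transpose with smallest singular value at least σ). Let P_R = ∫₀^∞ exp(tA)·B·Bᵀ·exp(tAᵀ) dt be the controllability Gramian. Then for every vector x ∈ ℝⁿ, xᵀ·P_R·x ≥ (σ²/(16·‖A‖₂))·‖x‖₂²; equivalently, λ_min(P_R) ≥ σ²/(16·‖A‖₂). -/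
set_option maxHeartbeats 1000000


open Matrix MeasureTheory
open scoped Matrix.Norms.L2Operator

/-- The Euclidean norm of a vector in `ℝⁿ`. -/
noncomputable def euclNorm {n : ℕ} (x : Fin n → ℝ) : ℝ :=
  Real.sqrt (∑ i, x i ^ 2)

lemma euclNorm_eq {n : ℕ} (x : Fin n → ℝ) :
    euclNorm x = ‖(EuclideanSpace.equiv (Fin n) ℝ).symm x‖ := by
  rw [EuclideanSpace.norm_eq]
  simp [euclNorm, Real.norm_eq_abs, sq_abs]

lemma euclNorm_nonneg {n : ℕ} (x : Fin n → ℝ) : 0 ≤ euclNorm x := Real.sqrt_nonneg _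

lemma euclNorm_sq {n : ℕ} (x : Fin n → ℝ) : euclNorm x ^ 2 = ∑ i, x i ^ 2 :=
  Real.sq_sqrt (by positivity)

lemma real_transpose_eq_conjTranspose {k l : Type*} (A : Matrix k l ℝ) : Aᵀ = Aᴴ := by
  ext i j; simp [Matrix.conjTranspose_apply]

lemma euclNorm_mulVec_le {k l : ℕ} (M : Matrix (Fin k) (Fin l) ℝ) (v : Fin l → ℝ) :
    euclNorm (M *ᵥ v) ≤ ‖M‖ * euclNorm v := by
  rw [euclNorm_eq, euclNorm_eq]
  exact M.l2_opNorm_mulVec ((EuclideanSpace.equiv (Fin l) ℝ).symm v)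

lemma matrix_norm_exp_le {n : ℕ} [Nontrivial (Matrix (Fin n) (Fin n) ℝ)]
    (X : Matrix (Fin n) (Fin n) ℝ) :
    ‖NormedSpace.exp X‖ ≤ Real.exp ‖X‖ := by
  rw [Real.exp_eq_exp_ℝ, NormedSpace.exp_eq_tsum_div (𝔸 := ℝ), NormedSpace.exp_eq_tsum ℝ]
  refine (norm_tsum_le_tsum_norm (NormedSpace.norm_expSeries_summable' (𝕂 := ℝ) X)).trans ?_
  refine Summable.tsum_le_tsum (fun k => ?_) (NormedSpace.norm_expSeries_summable' (𝕂 := ℝ) X)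
    (Real.summable_pow_div_factorial ‖X‖)
  have hpow : ‖X ^ k‖ ≤ ‖X‖ ^ k := by
    cases k with
    | zero => simp
    | succ k => exact norm_pow_le' X k.succ_pos
  calc ‖(k.factorial⁻¹ : ℝ) • X ^ k‖ = (k.factorial : ℝ)⁻¹ * ‖X ^ k‖ := by
        rw [norm_smul, Real.norm_eq_abs, abs_inv, Nat.abs_cast]
    _ ≤ (k.factorial : ℝ)⁻¹ * ‖X‖ ^ k := by
        gcongr
    _ = ‖X‖ ^ k / k.factorial := by ring

lemma dot_mul_transpose {n m : ℕ} (M : Matrix (Fin n) (Fin m) ℝ) (x : Fin n → ℝ) :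
    x ⬝ᵥ (M * Mᵀ) *ᵥ x = ∑ i, (Mᵀ *ᵥ x) i ^ 2 := by
  rw [← Matrix.mulVec_mulVec, Matrix.dotProduct_mulVec, ← Matrix.mulVec_transpose]
  simp [dotProduct, sq]

/-- Let `A ≠ 0` admit the exponential decay bound
`‖exp(tA)‖₂ ≤ M·exp(−αt)` for all `t ≥ 0`, and let `B` satisfy `‖Bᵀ·v‖₂ ≥ σ·‖v‖₂`
for all `v` and some `σ > 0`.  With `P_R = ∫₀^∞ exp(tA)·B·Bᵀ·exp(tAᵀ) dt`, every
`x ∈ ℝⁿ` satisfies `xᵀ·P_R·x ≥ (σ²/(16·‖A‖₂))·‖x‖₂²`; equivalently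
`λ_min(P_R) ≥ σ²/(16·‖A‖₂)`. -/
theorem stmt_14 {n m : ℕ} (A : Matrix (Fin n) (Fin n) ℝ) (hA : A ≠ 0)
    (B : Matrix (Fin n) (Fin m) ℝ)
    (M α : ℝ) (hM : 0 < M) (hα : 0 < α)
    (hdecay : ∀ t : ℝ, 0 ≤ t →
      ‖NormedSpace.exp (t • A)‖ ≤ M * Real.exp (-α * t))
    (σ : ℝ) (hσ : 0 < σ)
    (hB : ∀ v : Fin n → ℝ, σ * euclNorm v ≤ euclNorm (Bᵀ *ᵥ v)) :
    (∀ x : Fin n → ℝ,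
      σ ^ 2 / (16 * ‖A‖) * (euclNorm x) ^ 2 ≤
        x ⬝ᵥ (∫ t in Set.Ioi (0 : ℝ),
          NormedSpace.exp (t • A) * (B * Bᵀ) * NormedSpace.exp (t • Aᵀ)) *ᵥ x) ∧
    ∀ (h : (∫ t in Set.Ioi (0 : ℝ),
        NormedSpace.exp (t • A) * (B * Bᵀ) * NormedSpace.exp (t • Aᵀ)).IsHermitian),
      σ ^ 2 / (16 * ‖A‖) ≤ ⨅ i, h.eigenvalues i := by
  classical
  have hn : Nontrivial (Matrix (Fin n) (Fin n) ℝ) := ⟨A, 0, hA⟩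
  have hc : (0:ℝ) < ‖A‖ := norm_pos_iff.mpr hA
  have hexpT : ∀ t : ℝ, NormedSpace.exp (t • Aᵀ) = (NormedSpace.exp (t • A))ᵀ := by
    intro t; rw [← Matrix.transpose_smul, Matrix.exp_transpose]
  have hnormT : ∀ X : Matrix (Fin n) (Fin n) ℝ, ‖Xᵀ‖ = ‖X‖ := by
    intro X; rw [real_transpose_eq_conjTranspose, Matrix.l2_opNorm_conjTranspose]
  set F : ℝ → Matrix (Fin n) (Fin n) ℝ :=
    fun t => NormedSpace.exp (t • A) * (B * Bᵀ) * NormedSpace.exp (t • Aᵀ) with hFdef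
  have hFcont : Continuous F := by
    letI : NormedAlgebra ℚ (Matrix (Fin n) (Fin n) ℝ) := NormedAlgebra.restrictScalars ℚ ℝ _
    have he : Continuous fun t : ℝ => NormedSpace.exp (t • A) :=
      NormedSpace.exp_continuous.comp (continuous_id.smul continuous_const)
    have he' : Continuous fun t : ℝ => NormedSpace.exp (t • Aᵀ) :=
      NormedSpace.exp_continuous.comp (continuous_id.smul continuous_const)
    exact (he.mul continuous_const).mul he'
  have hbound : ∀ t ∈ Set.Ioi (0:ℝ),
      ‖F t‖ ≤ (M * M * ‖B * Bᵀ‖) * Real.exp (-(2*α) * t) := by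
    intro t ht
    have ht0 : (0:ℝ) ≤ t := le_of_lt ht
    have h1 : ‖NormedSpace.exp (t • A)‖ ≤ M * Real.exp (-α * t) := hdecay t ht0
    have h2 : ‖NormedSpace.exp (t • Aᵀ)‖ ≤ M * Real.exp (-α * t) := by
      rw [hexpT t, hnormT]; exact hdecay t ht0
    have hMe : (0:ℝ) ≤ M * Real.exp (-α * t) := by positivity
    calc ‖F t‖ ≤ ‖NormedSpace.exp (t • A) * (B * Bᵀ)‖ * ‖NormedSpace.exp (t • Aᵀ)‖ :=
          Matrix.l2_opNorm_mul _ _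
      _ ≤ (‖NormedSpace.exp (t • A)‖ * ‖B * Bᵀ‖) * ‖NormedSpace.exp (t • Aᵀ)‖ := by
          gcongr
          exact Matrix.l2_opNorm_mul _ _
      _ ≤ ((M * Real.exp (-α * t)) * ‖B * Bᵀ‖) * (M * Real.exp (-α * t)) := by
          gcongr
      _ = (M * M * ‖B * Bᵀ‖) * (Real.exp (-α * t) * Real.exp (-α * t)) := by ring
      _ = (M * M * ‖B * Bᵀ‖) * Real.exp (-(2*α) * t) := by
          rw [← Real.exp_add]; congr 1; ring
  have hInt : IntegrableOn F (Set.Ioi (0:ℝ)) := by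
    refine Integrable.mono' ((exp_neg_integrableOn_Ioi 0 (by positivity : (0:ℝ) < 2*α)).const_mul
      (M * M * ‖B * Bᵀ‖)) hFcont.aestronglyMeasurable.restrict ?_
    filter_upwards [ae_restrict_mem measurableSet_Ioi] with t ht
    exact hbound t ht
  have hquad : ∀ (x : Fin n → ℝ) (t : ℝ),
      x ⬝ᵥ F t *ᵥ x = ∑ i, ((NormedSpace.exp (t • A) * B)ᵀ *ᵥ x) i ^ 2 := by
    intro x t
    have hft : F t = (NormedSpace.exp (t • A) * B) * (NormedSpace.exp (t • A) * B)ᵀ := by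
      simp only [hFdef, hexpT t, Matrix.transpose_mul, Matrix.mul_assoc]
    rw [hft, dot_mul_transpose]
  have key : ∀ x : Fin n → ℝ,
      σ ^ 2 / (16 * ‖A‖) * (euclNorm x) ^ 2 ≤
        x ⬝ᵥ (∫ t in Set.Ioi (0:ℝ), F t) *ᵥ x := by
    intro x
    set L : Matrix (Fin n) (Fin n) ℝ →L[ℝ] ℝ :=
      LinearMap.toContinuousLinearMap
        { toFun := fun M' => x ⬝ᵥ M' *ᵥ x
          map_add' := fun M' N' => by simp [Matrix.add_mulVec, dotProduct_add]
          map_smul' := fun r M' => by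
            simp [Matrix.smul_mulVec, dotProduct_smul] } with hLdef
    have hLapp : ∀ M' : Matrix (Fin n) (Fin n) ℝ, L M' = x ⬝ᵥ M' *ᵥ x := by
      intro M'
      rw [hLdef, LinearMap.coe_toContinuousLinearMap']
      rfl
    have hswap : x ⬝ᵥ (∫ t in Set.Ioi (0:ℝ), F t) *ᵥ x
        = ∫ t in Set.Ioi (0:ℝ), x ⬝ᵥ F t *ᵥ x := by
      have hcc := L.integral_comp_comm hInt
      simp only [hLapp] at hcc
      exact hcc.symm
    have hg_int : IntegrableOn (fun t => x ⬝ᵥ F t *ᵥ x) (Set.Ioi (0:ℝ)) := by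
      have hic := L.integrable_comp hInt
      simp only [hLapp] at hic
      exact hic
    have hg_nonneg : ∀ t : ℝ, 0 ≤ x ⬝ᵥ F t *ᵥ x := by
      intro t; rw [hquad x t]; positivity
    set T : ℝ := (2 * ‖A‖)⁻¹ with hTdef
    have hT : 0 < T := by positivity
    have hlow : ∀ t ∈ Set.Ioc (0:ℝ) T,
        σ ^ 2 * Real.exp (-1) * (euclNorm x) ^ 2 ≤ x ⬝ᵥ F t *ᵥ x := by
      intro t ht
      obtain ⟨ht0, htT⟩ := ht
      set E : Matrix (Fin n) (Fin n) ℝ := NormedSpace.exp (t • A) with hE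
      set y : Fin n → ℝ := Eᵀ *ᵥ x with hy
      have hxy : NormedSpace.exp ((-t) • Aᵀ) *ᵥ y = x := by
        rw [hy, hE, ← hexpT t, Matrix.mulVec_mulVec,
          ← Matrix.exp_add_of_commute _ _ (((Commute.refl Aᵀ).smul_left (-t)).smul_right t),
          neg_smul, neg_add_cancel, NormedSpace.exp_zero, Matrix.one_mulVec]
      have hxle : euclNorm x ≤ Real.exp (t * ‖A‖) * euclNorm y := by
        calc euclNorm x = euclNorm (NormedSpace.exp ((-t) • Aᵀ) *ᵥ y) := by rw [hxy]
          _ ≤ ‖NormedSpace.exp ((-t) • Aᵀ)‖ * euclNorm y := euclNorm_mulVec_le _ _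
          _ ≤ Real.exp ‖(-t) • Aᵀ‖ * euclNorm y := by
              gcongr
              · exact euclNorm_nonneg _
              · exact matrix_norm_exp_le _
          _ = Real.exp (t * ‖A‖) * euclNorm y := by
              rw [norm_smul, Real.norm_eq_abs, abs_neg, abs_of_nonneg (le_of_lt ht0), hnormT]
      have hylb : Real.exp (-(t * ‖A‖)) * euclNorm x ≤ euclNorm y := by
        rw [Real.exp_neg, inv_mul_le_iff₀ (Real.exp_pos _)]
        exact hxle
      rw [hquad x t]
      have hsum : ∑ i, ((E * B)ᵀ *ᵥ x) i ^ 2 = euclNorm (Bᵀ *ᵥ y) ^ 2 := by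
        rw [euclNorm_sq, hy, Matrix.transpose_mul, ← Matrix.mulVec_mulVec]
      rw [← hE, hsum]
      have hba : σ * (Real.exp (-(t * ‖A‖)) * euclNorm x) ≤ euclNorm (Bᵀ *ᵥ y) :=
        le_trans (mul_le_mul_of_nonneg_left hylb hσ.le) (hB y)
      have hb0 : 0 ≤ σ * (Real.exp (-(t * ‖A‖)) * euclNorm x) := by
        have := euclNorm_nonneg x; positivity
      have hsq : (σ * (Real.exp (-(t * ‖A‖)) * euclNorm x)) ^ 2 ≤ euclNorm (Bᵀ *ᵥ y) ^ 2 :=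
        pow_le_pow_left₀ hb0 hba 2
      have he2 : Real.exp (-1 : ℝ) ≤ Real.exp (-(t * ‖A‖)) ^ 2 := by
        rw [← Real.exp_nat_mul]
        refine Real.exp_le_exp.mpr ?_
        have h2T : t * (2 * ‖A‖) ≤ 1 := by
          rw [hTdef] at htT
          calc t * (2 * ‖A‖) ≤ (2 * ‖A‖)⁻¹ * (2 * ‖A‖) := by gcongr
            _ = 1 := inv_mul_cancel₀ (by positivity)
        push_cast
        nlinarith
      calc σ ^ 2 * Real.exp (-1) * euclNorm x ^ 2
          ≤ σ ^ 2 * Real.exp (-(t * ‖A‖)) ^ 2 * euclNorm x ^ 2 := by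
            gcongr
        _ = (σ * (Real.exp (-(t * ‖A‖)) * euclNorm x)) ^ 2 := by ring
        _ ≤ euclNorm (Bᵀ *ᵥ y) ^ 2 := hsq
    have hconst : σ ^ 2 / (16 * ‖A‖) * euclNorm x ^ 2
        ≤ T * (σ ^ 2 * Real.exp (-1) * euclNorm x ^ 2) := by
      have h1 : Real.exp 1 < 2.7182818286 := Real.exp_one_lt_d9
      have h2 : (0:ℝ) < Real.exp 1 := Real.exp_pos 1
      have hxe : (0:ℝ) ≤ euclNorm x ^ 2 := sq_nonneg _
      have hkey : σ ^ 2 / (16 * ‖A‖) ≤ T * (σ ^ 2 * Real.exp (-1)) := by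
        rw [hTdef, Real.exp_neg, div_le_iff₀ (by positivity : (0:ℝ) < 16 * ‖A‖)]
        have : (2 * ‖A‖)⁻¹ * (σ ^ 2 * (Real.exp 1)⁻¹) * (16 * ‖A‖)
            = σ ^ 2 * (8 / Real.exp 1) := by
          field_simp
          ring
        rw [this]
        have h8 : (1:ℝ) ≤ 8 / Real.exp 1 := by
          rw [le_div_iff₀ h2]
          nlinarith
        nlinarith [sq_nonneg σ]
      calc σ ^ 2 / (16 * ‖A‖) * euclNorm x ^ 2
          ≤ (T * (σ ^ 2 * Real.exp (-1))) * euclNorm x ^ 2 := by gcongr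
        _ = T * (σ ^ 2 * Real.exp (-1) * euclNorm x ^ 2) := by ring
    refine le_trans hconst ?_
    rw [hswap]
    calc T * (σ ^ 2 * Real.exp (-1) * euclNorm x ^ 2)
        = ∫ _ in Set.Ioc (0:ℝ) T, (σ ^ 2 * Real.exp (-1) * euclNorm x ^ 2) := by
          rw [setIntegral_const, Real.volume_real_Ioc_of_le hT.le, smul_eq_mul,
            sub_zero]
      _ ≤ ∫ t in Set.Ioc (0:ℝ) T, x ⬝ᵥ F t *ᵥ x := by
          refine setIntegral_mono_on
            (integrableOn_const (by rw [Real.volume_Ioc]; exact ENNReal.ofReal_ne_top))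
            (hg_int.mono_set Set.Ioc_subset_Ioi_self) measurableSet_Ioc hlow
      _ ≤ ∫ t in Set.Ioi (0:ℝ), x ⬝ᵥ F t *ᵥ x := by
          refine setIntegral_mono_set hg_int
            (Filter.Eventually.of_forall hg_nonneg)
            (HasSubset.Subset.eventuallyLE Set.Ioc_subset_Ioi_self)
  refine ⟨key, ?_⟩
  intro h
  have hn0 : 0 < n := by
    rcases Nat.eq_zero_or_pos n with h0 | h0
    · subst h0
      exact absurd (by ext i j; exact i.elim0) hA
    · exact h0
  haveI : Nonempty (Fin n) := ⟨⟨0, hn0⟩⟩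
  refine le_ciInf fun i => ?_
  have heig := h.eigenvalues_eq i
  have hxk := key ⇑(h.eigenvectorBasis i)
  have hnorm1 : euclNorm ⇑(h.eigenvectorBasis i) = 1 := by
    rw [euclNorm_eq]
    exact h.eigenvectorBasis.orthonormal.1 i
  rw [hnorm1, one_pow, mul_one] at hxk
  rw [heig]
  simpa using hxk
end
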